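/- arXiv:1809.02636 — 8 statements merged into one kernel-verified Lean document; each statement's English description precedes it below -/
import Mathlib

section
/- Let G be a finite simple graph and let u, v be adjacent vertices of G with no common neighbor and deg(u) = deg(v) = 2. Then either the connected component of u in G induces a chordless path or a chordless cycle, or G contains a chain all of whose vertices lie in the connected component of u. -/
/-- A chain in a graph `H`: vertices `x, x₁, x₂, x₃` forming a path with
`x ≠ x₃`, `deg x ≥ 3` and `deg x₁ = deg x₂ = 2`. -/
def GraphChain {V : Type*} (H : SimpleGraph V) (x x1 x2 x3 : V) : Prop :=
  H.Adj x x1 ∧ H.Adj x1 x2 ∧ H.Adj x2 x3 ∧ x ≠ x3 ∧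
    3 ≤ (H.neighborSet x).ncard ∧
    (H.neighborSet x1).ncard = 2 ∧ (H.neighborSet x2).ncard = 2

namespace ClaimChainAux

open SimpleGraph

variable {V : Type*} {G : SimpleGraph V}

lemma getVert_injOn' {a b : V} (p : G.Walk a b) (hp : p.IsPath) :
    ∀ i, i ≤ p.length → ∀ j, j ≤ p.length → p.getVert i = p.getVert j → i = j := by
  induction p with
  | nil => intro i hi j hj _; simp only [Walk.length_nil, Nat.le_zero] at hi hj; omega
  | @cons u v w h q ih =>
    rw [Walk.cons_isPath_iff] at hp
    intro i hi j hj hij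
    match i, j with
    | 0, 0 => rfl
    | 0, j+1 =>
      exfalso
      apply hp.2
      rw [Walk.mem_support_iff_exists_getVert]
      refine ⟨j, ?_, ?_⟩
      · simpa using hij.symm
      · simpa [Walk.length_cons] using hj
    | i+1, 0 =>
      exfalso
      apply hp.2
      rw [Walk.mem_support_iff_exists_getVert]
      refine ⟨i, ?_, ?_⟩
      · simpa using hij
      · simpa [Walk.length_cons] using hi
    | i+1, j+1 =>
      simp only [Walk.getVert_cons_succ] at hij
      have := ih hp.1 i (by simpa [Walk.length_cons] using hi) j
        (by simpa [Walk.length_cons] using hj) hij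
      omega

lemma exists_boundary_edge (S : Set V) :
    ∀ {a w : V}, (q : G.Walk a w) → a ∈ S → w ∉ S → ∃ x y, G.Adj x y ∧ x ∈ S ∧ y ∉ S := by
  intro a w q
  induction q with
  | nil => intro ha hw; exact absurd ha hw
  | @cons u v _ h q ih =>
    intro ha hw
    by_cases hv : v ∈ S
    · exact ih hv hw
    · exact ⟨u, v, h, ha, hv⟩

lemma second_neighbor {w z : V} (h2 : (G.neighborSet w).ncard = 2)
    (hz : z ∈ G.neighborSet w) : ∃ z', z' ∈ G.neighborSet w ∧ z' ≠ z := by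
  obtain ⟨a', b', hne, hset⟩ := Set.ncard_eq_two.mp h2
  rw [hset] at hz ⊢
  rcases hz with rfl | rfl
  · exact ⟨b', by simp, hne.symm⟩
  · exact ⟨a', by simp, hne⟩

lemma path_or_cycle {W : Type*} [Fintype W] (H : SimpleGraph W) (hconn : H.Connected)
    (hdeg : ∀ w, (H.neighborSet w).ncard ≤ 2) :
    (∃ n, Nonempty (H ≃g SimpleGraph.pathGraph n)) ∨
    (∃ n, Nonempty (H ≃g SimpleGraph.cycleGraph n)) := by
  classical
  obtain ⟨w0⟩ := hconn.nonempty
  set S : Set ℕ := {n | ∃ (a b : W) (q : H.Walk a b), q.IsPath ∧ q.length = n} with hS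
  have hS0 : 0 ∈ S := ⟨w0, w0, Walk.nil, by simp, rfl⟩
  have hbdd : BddAbove S := by
    refine ⟨Fintype.card W, ?_⟩
    rintro m ⟨a, b, q, hq, rfl⟩
    exact hq.length_lt.le
  obtain ⟨a, b, p, hp, hlen⟩ := Nat.sSup_mem ⟨0, hS0⟩ hbdd
  set n := p.length with hn
  have hmax : ∀ (x y : W) (q : H.Walk x y), q.IsPath → q.length ≤ n := by
    intro x y q hq
    have hmem : q.length ∈ S := ⟨x, y, q, hq, rfl⟩
    calc q.length ≤ sSup S := le_csSup hbdd hmem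
    _ = n := hlen.symm
  have hinj := getVert_injOn' p hp
  -- spanning
  have hspan : ∀ w, w ∈ p.support := by
    by_contra hcon
    push_neg at hcon
    obtain ⟨w, hw⟩ := hcon
    obtain ⟨x, y, hxy, hxs, hys⟩ :=
      exists_boundary_edge {z | z ∈ p.support} ((hconn a w).some) p.start_mem_support hw
    obtain ⟨i, hieq, hile⟩ := Walk.mem_support_iff_exists_getVert.mp hxs
    by_cases hi0 : i = 0
    · subst hi0
      rw [p.getVert_zero] at hieq
      subst hieq
      have hnew : (p.cons hxy.symm).IsPath := by
        rw [Walk.cons_isPath_iff]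
        exact ⟨hp, hys⟩
      have := hmax _ _ _ hnew
      simp only [Walk.length_cons] at this
      omega
    · by_cases hin : i = n
      · subst hin
        rw [hn, p.getVert_length] at hieq
        subst hieq
        have hnew : (p.reverse.cons hxy.symm).IsPath := by
          rw [Walk.cons_isPath_iff]
          refine ⟨hp.reverse, ?_⟩
          rw [Walk.support_reverse]
          simpa using hys
        have := hmax _ _ _ hnew
        simp only [Walk.length_cons, Walk.length_reverse] at this
        omega
      · -- interior: three distinct neighbors
        have hl1 : p.getVert (i-1) ∈ H.neighborSet x := by
          have ha := p.adj_getVert_succ (show i - 1 < p.length by omega)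
          rw [show i - 1 + 1 = i by omega, hieq] at ha
          exact ha.symm
        have hl2 : p.getVert (i+1) ∈ H.neighborSet x := by
          have ha := p.adj_getVert_succ (show i < p.length by omega)
          rw [hieq] at ha
          exact ha
        have hy : y ∈ H.neighborSet x := hxy
        have hne12 : p.getVert (i-1) ≠ p.getVert (i+1) := by
          intro h
          have := hinj (i-1) (by omega) (i+1) (by omega) h
          omega
        have hys' : ∀ k, k ≤ p.length → p.getVert k ≠ y := by
          intro k hk h
          exact hys (Walk.mem_support_iff_exists_getVert.mpr ⟨k, h, hk⟩)
        have hsub : ({p.getVert (i-1), p.getVert (i+1), y} : Set W) ⊆ H.neighborSet x := by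
          rintro z (rfl | rfl | rfl)
          · exact hl1
          · exact hl2
          · exact hy
        have h3 : ({p.getVert (i-1), p.getVert (i+1), y} : Set W).ncard = 3 := by
          refine Set.ncard_eq_three.mpr ⟨_, _, _, hne12, ?_, ?_, rfl⟩
          · exact hys' (i-1) (by omega)
          · exact hys' (i+1) (by omega)
        have hle := Set.ncard_le_ncard hsub (Set.toFinite _)
        rw [h3] at hle
        have := hdeg x
        omega
  -- cardinality
  have hcard : Fintype.card W = n + 1 := by
    classical
    have hnd := hp.support_nodup
    have huniv : p.support.toFinset = Finset.univ := by
      ext z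
      simp [hspan z]
    calc Fintype.card W = p.support.toFinset.card := by rw [huniv, Finset.card_univ]
    _ = p.support.length := List.toFinset_card_of_nodup hnd
    _ = n + 1 := by rw [Walk.length_support]
  -- the equivalence
  have hsurj : ∀ w : W, ∃ i : Fin (n+1), p.getVert i.val = w := by
    intro w
    obtain ⟨i, hiw, hile⟩ := Walk.mem_support_iff_exists_getVert.mp (hspan w)
    exact ⟨⟨i, by omega⟩, hiw⟩
  have hinj' : Function.Injective (fun i : Fin (n+1) => p.getVert i.val) := by
    intro i j hij
    exact Fin.ext (hinj i.val (Nat.lt_succ_iff.mp i.isLt) j.val (Nat.lt_succ_iff.mp j.isLt) hij)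
  let e : Fin (n+1) ≃ W := Equiv.ofBijective _ ⟨hinj', fun w => hsurj w⟩
  have he : ∀ i : Fin (n+1), e i = p.getVert i.val := fun _ => rfl
  -- interior neighborhoods
  have hnbr : ∀ i : ℕ, 0 < i → i < n →
      H.neighborSet (p.getVert i) = {p.getVert (i-1), p.getVert (i+1)} := by
    intro i h0 hilt
    have hne12 : p.getVert (i-1) ≠ p.getVert (i+1) := by
      intro h
      have := hinj (i-1) (by omega) (i+1) (by omega) h
      omega
    have hsub : ({p.getVert (i-1), p.getVert (i+1)} : Set W) ⊆ H.neighborSet (p.getVert i) := by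
      rintro z (rfl | rfl)
      · have ha := p.adj_getVert_succ (show i - 1 < p.length by omega)
        rw [show i - 1 + 1 = i by omega] at ha
        exact ha.symm
      · exact p.adj_getVert_succ (show i < p.length by omega)
    refine (Set.eq_of_subset_of_ncard_le hsub ?_ (Set.toFinite _)).symm
    rw [Set.ncard_pair hne12]
    exact hdeg _
  -- key adjacency classification
  have hkey : ∀ i, i ≤ n → ∀ j, j ≤ n → H.Adj (p.getVert i) (p.getVert j) →
      j = i + 1 ∨ i = j + 1 ∨ (i = 0 ∧ j = n) ∨ (i = n ∧ j = 0) := by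
    have interior : ∀ i, 0 < i → i < n → ∀ j, j ≤ n →
        H.Adj (p.getVert i) (p.getVert j) → j = i + 1 ∨ i = j + 1 := by
      intro i h0 hilt j hj hadj
      have hmem : p.getVert j ∈ H.neighborSet (p.getVert i) := hadj
      rw [hnbr i h0 hilt] at hmem
      rcases hmem with h | h
      · right
        have := hinj j hj (i-1) (by omega) h
        omega
      · left
        have := hinj j hj (i+1) (by omega) h
        omega
    intro i hi j hj hadj
    by_cases hint : 0 < i ∧ i < n
    · rcases interior i hint.1 hint.2 j hj hadj with h | h
      · exact Or.inl h
      · exact Or.inr (Or.inl h)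
    · by_cases hjint : 0 < j ∧ j < n
      · rcases interior j hjint.1 hjint.2 i hi hadj.symm with h | h
        · exact Or.inr (Or.inl h)
        · exact Or.inl h
      · have hij : i ≠ j := by
          intro h
          subst h
          exact hadj.ne rfl
        omega
  by_cases hab : H.Adj a b
  · -- cycle case
    right
    have hn1 : 1 ≤ n := by
      rcases Nat.eq_zero_or_pos n with h | h
      · exfalso
        have : a = b := Walk.eq_of_length_eq_zero (p := p) (by omega)
        subst this
        exact hab.ne rfl
      · exact h
    refine ⟨n + 1, ⟨SimpleGraph.Iso.symm ⟨e, ?_⟩⟩⟩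
    intro i j
    rw [he, he, SimpleGraph.cycleGraph_adj']
    constructor
    · intro hadj
      have hjn : (j:ℕ) ≤ n := Nat.lt_succ_iff.mp j.isLt
      have hin : (i:ℕ) ≤ n := Nat.lt_succ_iff.mp i.isLt
      rcases hkey i.val hin j.val hjn hadj with h | h | ⟨h1, h2⟩ | ⟨h1, h2⟩
      · -- j = i + 1 : (j - i).val = 1
        right
        rw [Fin.coe_sub, show n + 1 - (i:ℕ) + (j:ℕ) = (n + 1) + 1 by omega,
          Nat.add_mod_left, Nat.mod_eq_of_lt (by omega)]
      · left
        rw [Fin.coe_sub, show n + 1 - (j:ℕ) + (i:ℕ) = (n + 1) + 1 by omega,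
          Nat.add_mod_left, Nat.mod_eq_of_lt (by omega)]
      · -- i = 0, j = n : (i - j).val = 1
        left
        rw [Fin.coe_sub, show n + 1 - (j:ℕ) + (i:ℕ) = 1 by omega,
          Nat.mod_eq_of_lt (by omega)]
      · right
        rw [Fin.coe_sub, show n + 1 - (i:ℕ) + (j:ℕ) = 1 by omega,
          Nat.mod_eq_of_lt (by omega)]
    · rintro (h | h)
      · -- (i - j).val = 1
        rw [Fin.coe_sub] at h
        set di : ℕ := n + 1 - (j:ℕ) + (i:ℕ) with hdi
        have hjn : (j:ℕ) ≤ n := Nat.lt_succ_iff.mp j.isLt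
        have hin : (i:ℕ) ≤ n := Nat.lt_succ_iff.mp i.isLt
        have hcases : di = 1 ∨ di = n + 2 := by
          by_cases hlt : di < n + 1
          · left; rwa [Nat.mod_eq_of_lt hlt] at h
          · right
            have hge : n + 1 ≤ di := by omega
            have hlt2 : di - (n+1) < n + 1 := by omega
            rw [Nat.mod_eq_sub_mod hge, Nat.mod_eq_of_lt hlt2] at h
            omega
        rcases hcases with h' | h'
        · -- j = n, i = 0
          have hj' : (j:ℕ) = n := by omega
          have hi' : (i:ℕ) = 0 := by omega
          rw [hi', hj', p.getVert_zero, hn, p.getVert_length]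
          exact hab
        · -- i = j + 1
          have hi' : (i:ℕ) = (j:ℕ) + 1 := by omega
          rw [hi']
          exact (p.adj_getVert_succ (show (j:ℕ) < p.length by omega)).symm
      · rw [Fin.coe_sub] at h
        set di : ℕ := n + 1 - (i:ℕ) + (j:ℕ) with hdi
        have hjn : (j:ℕ) ≤ n := Nat.lt_succ_iff.mp j.isLt
        have hin : (i:ℕ) ≤ n := Nat.lt_succ_iff.mp i.isLt
        have hcases : di = 1 ∨ di = n + 2 := by
          by_cases hlt : di < n + 1
          · left; rwa [Nat.mod_eq_of_lt hlt] at h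
          · right
            have hge : n + 1 ≤ di := by omega
            have hlt2 : di - (n+1) < n + 1 := by omega
            rw [Nat.mod_eq_sub_mod hge, Nat.mod_eq_of_lt hlt2] at h
            omega
        rcases hcases with h' | h'
        · have hi' : (i:ℕ) = n := by omega
          have hj' : (j:ℕ) = 0 := by omega
          rw [hi', hj', p.getVert_zero, hn, p.getVert_length]
          exact hab.symm
        · have hj' : (j:ℕ) = (i:ℕ) + 1 := by omega
          rw [hj']
          exact p.adj_getVert_succ (show (i:ℕ) < p.length by omega)
  · -- path case
    left
    refine ⟨n + 1, ⟨SimpleGraph.Iso.symm ⟨e, ?_⟩⟩⟩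
    intro i j
    rw [he, he, SimpleGraph.pathGraph_adj]
    have hjn : (j:ℕ) ≤ n := Nat.lt_succ_iff.mp j.isLt
    have hin : (i:ℕ) ≤ n := Nat.lt_succ_iff.mp i.isLt
    constructor
    · intro hadj
      rcases hkey i.val hin j.val hjn hadj with h | h | ⟨h1, h2⟩ | ⟨h1, h2⟩
      · left; omega
      · right; omega
      · exfalso
        apply hab
        rw [h1, h2] at hadj
        rw [p.getVert_zero] at hadj
        rw [hn, p.getVert_length] at hadj
        exact hadj
      · exfalso
        apply hab
        rw [h1, h2] at hadj
        rw [p.getVert_zero] at hadj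
        rw [hn, p.getVert_length] at hadj
        exact hadj.symm
    · rintro (h | h)
      · rw [show (j:ℕ) = (i:ℕ) + 1 by omega]
        exact p.adj_getVert_succ (show (i:ℕ) < p.length by omega)
      · rw [show (i:ℕ) = (j:ℕ) + 1 by omega]
        exact (p.adj_getVert_succ (show (j:ℕ) < p.length by omega)).symm

end ClaimChainAux

open SimpleGraph ClaimChainAux in
/-- Claim 2: if `u, v` are adjacent vertices with no common neighbor and
`deg u = deg v = 2`, then either the connected component of `u` induces a
chordless path or a chordless cycle, or `G` contains a chain lying inside
the connected component of `u`. -/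
theorem claim_chain {V : Type*} [Fintype V] (G : SimpleGraph V) (u v : V)
    (hadj : G.Adj u v)
    (hcommon : G.neighborSet u ∩ G.neighborSet v = ∅)
    (hdu : (G.neighborSet u).ncard = 2)
    (hdv : (G.neighborSet v).ncard = 2) :
    (∃ n : ℕ, Nonempty
      (G.induce (G.connectedComponentMk u).supp ≃g SimpleGraph.pathGraph n)) ∨
    (∃ n : ℕ, Nonempty
      (G.induce (G.connectedComponentMk u).supp ≃g SimpleGraph.cycleGraph n)) ∨
    (∃ x x1 x2 x3 : V, GraphChain G x x1 x2 x3 ∧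
      x ∈ (G.connectedComponentMk u).supp ∧ x1 ∈ (G.connectedComponentMk u).supp ∧
      x2 ∈ (G.connectedComponentMk u).supp ∧ x3 ∈ (G.connectedComponentMk u).supp) := by
  classical
  set C := (G.connectedComponentMk u).supp with hC
  have hmemC : ∀ y : V, y ∈ C ↔ G.Reachable y u := by
    intro y
    rw [hC, ConnectedComponent.mem_supp_iff, ConnectedComponent.eq]
  have huC : u ∈ C := (hmemC u).mpr (Reachable.refl u)
  have hCadj : ∀ y z : V, y ∈ C → G.Adj y z → z ∈ C := by
    intro y z hy hyz
    rw [hmemC] at hy ⊢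
    exact hyz.symm.reachable.trans hy
  by_cases hA : ∃ x ∈ C, 3 ≤ (G.neighborSet x).ncard
  · right; right
    obtain ⟨x0, hx0C, hx03⟩ := hA
    set D : Set ℕ := {d | ∃ x, x ∈ C ∧ 3 ≤ (G.neighborSet x).ncard ∧ G.dist x u = d} with hD
    have hDne : D.Nonempty := ⟨_, x0, hx0C, hx03, rfl⟩
    obtain ⟨x, hxC, hx3, hxd⟩ := Nat.sInf_mem hDne
    set d := sInf D with hd
    have hmin : ∀ y, y ∈ C → 3 ≤ (G.neighborSet y).ncard → d ≤ G.dist y u :=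
      fun y hy h3 => Nat.sInf_le ⟨y, hy, h3, rfl⟩
    obtain ⟨p0, hp0⟩ := ((hmemC x).mp hxC).exists_walk_length_eq_dist
    set q := p0.bypass with hqdef
    have hq : q.IsPath := p0.bypass_isPath
    have hqlen : q.length = d := by
      have h1 : q.length ≤ d := by
        rw [← hxd, ← hp0]
        exact p0.length_bypass_le
      have h2 : d ≤ q.length := by
        rw [← hxd]
        exact SimpleGraph.dist_le q
      omega
    have hsupC : ∀ y, y ∈ q.support → y ∈ C := by
      intro y hy
      rw [hmemC]
      exact ⟨q.dropUntil y hy⟩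
    have hd0 : d ≠ 0 := by
      intro h
      have hxu : x = u := Walk.eq_of_length_eq_zero (p := q) (by omega)
      rw [hxu, hdu] at hx3
      omega
    by_cases hd1 : d = 1
    · -- chain x, u, v, v'
      have hnil : ¬ q.Nil := by
        rw [Walk.nil_iff_length_eq]
        omega
      have hxu : G.Adj x u := by
        have h : G.Adj x (q.getVert 1) := q.adj_snd hnil
        rwa [show (1:ℕ) = q.length by omega, q.getVert_length] at h
      obtain ⟨v', hv'1, hv'2⟩ := second_neighbor hdv (show u ∈ G.neighborSet v from hadj.symm)
      have hvv' : G.Adj v v' := hv'1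
      have hxv' : x ≠ v' := by
        intro h
        have : x ∈ G.neighborSet u ∩ G.neighborSet v := ⟨hxu.symm, h ▸ hv'1⟩
        rw [hcommon] at this
        exact this
      have hvC : v ∈ C := hCadj u v huC hadj
      exact ⟨x, u, v, v', ⟨hxu, hadj, hvv', hxv', hx3, hdu, hdv⟩,
        hxC, huC, hvC, hCadj v v' hvC hvv'⟩
    · by_cases hd2 : d = 2
      · set w := q.getVert 1 with hw
        have hxw : G.Adj x w := by
          have h := q.adj_getVert_succ (show 0 < q.length by omega)
          rwa [q.getVert_zero] at h
        have hwu : G.Adj w u := by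
          have h := q.adj_getVert_succ (show 1 < q.length by omega)
          rwa [show (1:ℕ) + 1 = q.length by omega, q.getVert_length] at h
        have hxneu : x ≠ u := by
          intro h
          rw [h, SimpleGraph.dist_self] at hxd
          omega
        have hwC : w ∈ C := hCadj u w huC hwu.symm
        have hw2 : (G.neighborSet w).ncard = 2 := by
          have hle : ¬ 3 ≤ (G.neighborSet w).ncard := by
            intro h3
            have h1 := hmin w hwC h3
            have h2 : G.dist w u ≤ 1 := by
              have := SimpleGraph.dist_le (Walk.cons hwu Walk.nil)
              simpa using this
            omega
          have hpair : ({x, u} : Set V) ⊆ G.neighborSet w := by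
            rintro z (rfl | rfl)
            · exact hxw.symm
            · exact hwu
          have hge := Set.ncard_le_ncard hpair (Set.toFinite _)
          rw [Set.ncard_pair hxneu] at hge
          omega
        by_cases hwv : w = v
        · -- chain x, v, u, u'
          have hxv : G.Adj x v := hwv ▸ hxw
          obtain ⟨u', hu'1, hu'2⟩ := second_neighbor hdu (show v ∈ G.neighborSet u from hadj)
          have huu' : G.Adj u u' := hu'1
          have hxu' : x ≠ u' := by
            intro h
            have hmm : x ∈ G.neighborSet u ∩ G.neighborSet v := ⟨h ▸ hu'1, hxv.symm⟩
            rw [hcommon] at hmm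
            exact hmm
          exact ⟨x, v, u, u', ⟨hxv, hadj.symm, huu', hxu', hx3, hdv, hdu⟩,
            hxC, hwv ▸ hwC, huC, hCadj u u' huC huu'⟩
        · -- chain x, w, u, v
          have hxv : x ≠ v := by
            intro h
            rw [h, hdv] at hx3
            omega
          exact ⟨x, w, u, v, ⟨hxw, hwu, hadj, hxv, hx3, hw2, hdu⟩,
            hxC, hwC, huC, hCadj u v huC hadj⟩
      · -- d ≥ 3
        have hd3 : 3 ≤ q.length := by omega
        have hnil : ¬ q.Nil := by rw [Walk.nil_iff_length_eq]; omega
        have hnil2 : ¬ q.tail.Nil := by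
          rw [Walk.nil_iff_length_eq]
          have := Walk.length_tail_add_one hnil
          omega
        have hqinj := getVert_injOn' q hq
        have ha0 : G.Adj x (q.getVert 1) := by
          have h := q.adj_getVert_succ (show 0 < q.length by omega)
          rwa [q.getVert_zero] at h
        have ha1 : G.Adj (q.getVert 1) (q.getVert 2) :=
          q.adj_getVert_succ (show 1 < q.length by omega)
        have ha2 : G.Adj (q.getVert 2) (q.getVert 3) :=
          q.adj_getVert_succ (show 2 < q.length by omega)
        have hmem : ∀ k, k ≤ q.length → q.getVert k ∈ C := by
          intro k hk
          exact hsupC _ (Walk.mem_support_iff_exists_getVert.mpr ⟨k, rfl, hk⟩)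
        have hne : ∀ k l, k ≤ q.length → l ≤ q.length → k ≠ l →
            q.getVert k ≠ q.getVert l := by
          intro k l hk hl hkl h
          exact hkl (hqinj k hk l hl h)
        -- distance bounds
        have hdist1 : G.dist (q.getVert 1) u ≤ d - 1 := by
          have h : G.dist (q.getVert 1) u ≤ q.tail.length := SimpleGraph.dist_le q.tail
          have hlt := Walk.length_tail_add_one hnil
          omega
        have hdist2 : G.dist (q.getVert 2) u ≤ d - 2 := by
          have h : G.dist (q.tail.getVert 1) u ≤ q.tail.tail.length := SimpleGraph.dist_le q.tail.tail
          have hl1 := Walk.length_tail_add_one hnil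
          have hl2 := Walk.length_tail_add_one hnil2
          have heq : G.dist (q.getVert 2) u = G.dist (q.tail.getVert 1) u := by
            rw [Walk.getVert_tail q]
          rw [heq]
          omega
        have hcard2 : ∀ k, 0 < k → k + 1 ≤ q.length → q.getVert k ∈ C →
            G.dist (q.getVert k) u < d → (G.neighborSet (q.getVert k)).ncard = 2 := by
          intro k h0 hk hkC hdlt
          have hle : ¬ 3 ≤ (G.neighborSet (q.getVert k)).ncard := by
            intro h3
            have := hmin _ hkC h3
            omega
          have hpair : ({q.getVert (k-1), q.getVert (k+1)} : Set V) ⊆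
              G.neighborSet (q.getVert k) := by
            rintro z (rfl | rfl)
            · have h := q.adj_getVert_succ (show k - 1 < q.length by omega)
              rw [show k - 1 + 1 = k by omega] at h
              exact h.symm
            · exact q.adj_getVert_succ (show k < q.length by omega)
          have hge := Set.ncard_le_ncard hpair (Set.toFinite _)
          rw [Set.ncard_pair (hne (k-1) (k+1) (by omega) (by omega) (by omega))] at hge
          omega
        have h1C : q.getVert 1 ∈ C := hmem 1 (by omega)
        have h2C : q.getVert 2 ∈ C := hmem 2 (by omega)
        have hc1 : (G.neighborSet (q.getVert 1)).ncard = 2 := by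
          apply hcard2 1 (by omega) (by omega) h1C
          omega
        have hc2 : (G.neighborSet (q.getVert 2)).ncard = 2 := by
          apply hcard2 2 (by omega) (by omega) h2C
          omega
        refine ⟨x, q.getVert 1, q.getVert 2, q.getVert 3,
          ⟨ha0, ha1, ha2, ?_, hx3, hc1, hc2⟩, hxC, h1C, h2C, hmem 3 (by omega)⟩
        have := hne 0 3 (by omega) (by omega) (by omega)
        rwa [q.getVert_zero] at this
  · -- no high-degree vertex: component is a path or cycle
    push_neg at hA
    haveI : Fintype ↥C := Fintype.ofFinite _
    have hdegC : ∀ w : ↥C, ((G.induce C).neighborSet w).ncard ≤ 2 := by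
      intro w
      have himg : Subtype.val '' ((G.induce C).neighborSet w) = G.neighborSet ↑w := by
        ext z
        simp only [Set.mem_image, mem_neighborSet]
        constructor
        · rintro ⟨⟨z', hz'⟩, hadj', rfl⟩
          exact hadj'
        · intro hz
          exact ⟨⟨z, hCadj _ _ w.2 hz⟩, hz, rfl⟩
      have hcardeq := Set.ncard_image_of_injective
        ((G.induce C).neighborSet w) Subtype.val_injective
      rw [himg] at hcardeq
      have := hA ↑w w.2
      omega
    have hconnC : (G.induce C).Connected := by
      apply SimpleGraph.induce_connected_of_patches u huC
      intro y hy
      obtain ⟨p0⟩ := (hmemC y).mp hy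
      set q := p0.reverse with hq
      refine ⟨{w | w ∈ q.support}, ?_, q.start_mem_support, q.end_mem_support, ?_⟩
      · intro z hz
        rw [hmemC]
        exact ⟨(q.takeUntil z hz).reverse⟩
      · exact (q.connected_induce_support).preconnected _ _
    rcases path_or_cycle (G.induce C) hconnC hdegC with ⟨n, hn⟩ | ⟨n, hn⟩
    · exact Or.inl ⟨n, hn⟩
    · exact Or.inr (Or.inl ⟨n, hn⟩)
end

section
/- Let G be a finite simple graph in which every vertex has degree at least 2, and in which every degree-2 vertex has both neighbors of degree at least 3 and its two neighbors non-adjacent. Let v be a vertex of degree 4 with N(v) = {u₁, u₂, u₃, u₄}, such that the only edges among u₁, u₂, u₃, u₄ are u₁u₂ and u₃u₄, each uᵢ has exactly one neighbor u′ᵢ outside N[v], and u′₁, u′₂, u′₃, u′₄ are pairwise distinct. Then there is a chain x, x₁, x₂, x₃ in the graph G − v such that the graph G − {v, x, x₁, x₂, x₃} contains one of the following structures: (1) a connected component of size at least 4 whose induced subgraph is a chordless path or a chordless cycle, or (2) a chain y, y₁, y₂, y₃. -/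
/-- A chain of the induced subgraph `G[s]`: vertices `x, x₁, x₂, x₃ ∈ s`
forming a path with `x ≠ x₃`, `deg_{G[s]} x ≥ 3` and
`deg_{G[s]} x₁ = deg_{G[s]} x₂ = 2` (the degree of `w` in `G[s]` is
`|N_G(w) ∩ s|`). -/
def ChainInInduced {V : Type*} (G : SimpleGraph V) (s : Set V) (x x1 x2 x3 : V) : Prop :=
  x ∈ s ∧ x1 ∈ s ∧ x2 ∈ s ∧ x3 ∈ s ∧
  G.Adj x x1 ∧ G.Adj x1 x2 ∧ G.Adj x2 x3 ∧ x ≠ x3 ∧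
  3 ≤ (G.neighborSet x ∩ s).ncard ∧
  (G.neighborSet x1 ∩ s).ncard = 2 ∧ (G.neighborSet x2 ∩ s).ncard = 2

open SimpleGraph

namespace ChainAux

variable {W : Type*} {H : SimpleGraph W}

lemma getVert_mem_support {u v : W} (p : H.Walk u v) {i : ℕ} (hi : i ≤ p.length) :
    p.getVert i ∈ p.support :=
  Walk.mem_support_iff_exists_getVert.mpr ⟨i, rfl, hi⟩

lemma getVert_injOn {u v : W} {p : H.Walk u v} (hp : p.IsPath) :
    ∀ {i j : ℕ}, i < j → j ≤ p.length → p.getVert i ≠ p.getVert j := by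
  induction p with
  | nil => intro i j hij hj; simp only [Walk.length_nil] at hj; omega
  | cons h q ih =>
    rw [Walk.cons_isPath_iff] at hp
    intro i j hij hj
    rcases Nat.eq_zero_or_pos i with rfl | hi
    · have : (Walk.cons h q).getVert j = q.getVert (j - 1) :=
        Walk.getVert_cons q h (by omega)
      rw [Walk.getVert_zero, this]
      intro hEq
      exact hp.2 (hEq ▸ getVert_mem_support q (by
        simp only [Walk.length_cons] at hj; omega))
    · rw [Walk.getVert_cons q h (by omega), Walk.getVert_cons q h (by omega)]
      exact ih hp.1 (by omega) (by simp only [Walk.length_cons] at hj; omega)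

lemma three_le_ncard_neighborSet [Fintype W] {w x y z : W}
    (hxy : x ≠ y) (hxz : x ≠ z) (hyz : y ≠ z)
    (hx : H.Adj w x) (hy : H.Adj w y) (hz : H.Adj w z) :
    3 ≤ (H.neighborSet w).ncard := by
  have hsub : ({x, y, z} : Set W) ⊆ H.neighborSet w := by
    intro t ht
    rcases ht with rfl | rfl | rfl <;> assumption
  calc 3 = ({x, y, z} : Set W).ncard :=
        (Set.ncard_eq_three.mpr ⟨x, y, z, hxy, hxz, hyz, rfl⟩).symm
    _ ≤ _ := Set.ncard_le_ncard hsub (Set.toFinite _)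

lemma exists_crossing_edge {S : Set W} :
    ∀ {z x : W}, H.Walk z x → z ∉ S → x ∈ S →
      ∃ t w, H.Adj t w ∧ t ∉ S ∧ w ∈ S := by
  intro z x q
  induction q with
  | nil => intro hz hx; exact absurd hx hz
  | @cons a b c h q ih =>
    intro hz hx
    by_cases hb : b ∈ S
    · exact ⟨a, b, h, hz, hb⟩
    · exact ih hb hx

lemma fin_succ_val {n : ℕ} (hn : 1 ≤ n) (i j : Fin (n+1)) :
    (i - j).val = 1 ↔ ((j : ℕ) = n ∧ (i : ℕ) = 0) ∨ ((i : ℕ) = (j : ℕ) + 1) := by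
  have h1 : ((1 : Fin (n+1)) : ℕ) = 1 := by
    rw [Fin.val_one']; exact Nat.mod_eq_of_lt (by omega)
  have step1 : (i - j).val = 1 ↔ i = j + 1 := by
    constructor
    · intro h
      have h2 : i - j = 1 := Fin.ext (by rw [h, h1])
      have h3 := sub_eq_iff_eq_add.mp h2
      rw [h3]; exact add_comm _ _
    · intro h
      have h2 : i - j = 1 := sub_eq_iff_eq_add.mpr (h.trans (add_comm _ _))
      rw [h2, h1]
  rw [step1, Fin.ext_iff, Fin.val_add_one]
  rcases eq_or_ne j (Fin.last n) with h | h
  · have hj : (j : ℕ) = n := by rw [h]; rfl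
    simp only [h, if_true, hj]
    constructor
    · intro h0; exact Or.inl ⟨rfl, h0⟩
    · rintro (⟨-, h0⟩ | h0)
      · exact h0
      · exact absurd i.isLt (by omega)
  · simp only [h, if_false]
    have hj : (j : ℕ) ≠ n := fun hc => h (Fin.ext (by rw [hc]; rfl))
    tauto

/-- A finite connected graph with maximum degree at most 2 is a path graph or
a cycle graph. -/
lemma path_or_cycle [Fintype W] (hconn : H.Connected)
    (hdeg : ∀ w, (H.neighborSet w).ncard ≤ 2) :
    (∃ n, Nonempty (H ≃g pathGraph n)) ∨ (∃ n, Nonempty (H ≃g cycleGraph n)) := by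
  classical
  have hne : Nonempty W := hconn.nonempty
  obtain ⟨w0⟩ := hne
  set P : Set ℕ := {n | ∃ (x y : W) (p : H.Walk x y), p.IsPath ∧ p.length = n} with hP
  have hPne : P.Nonempty := ⟨0, w0, w0, Walk.nil, Walk.IsPath.nil, rfl⟩
  have hbdd : BddAbove P := by
    refine ⟨Fintype.card W, ?_⟩
    rintro n ⟨x, y, p, hp, rfl⟩
    exact hp.length_lt.le
  obtain ⟨x, y, p, hp, hlen⟩ : sSup P ∈ P := Nat.sSup_mem hPne hbdd
  have hmax : ∀ {x' y' : W} (q : H.Walk x' y'), q.IsPath → q.length ≤ p.length := by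
    intro x' y' q hq
    rw [hlen]
    exact le_csSup hbdd ⟨x', y', q, hq, rfl⟩
  set N := p.length with hN
  -- covering
  have hcover : ∀ z, z ∈ p.support := by
    by_contra hz
    push_neg at hz
    obtain ⟨z, hz⟩ := hz
    obtain ⟨q⟩ := hconn.preconnected z x
    obtain ⟨t, w, htw, ht, hw⟩ :=
      exists_crossing_edge (S := {w | w ∈ p.support}) q hz p.start_mem_support
    obtain ⟨i, rfl, hi⟩ := Walk.mem_support_iff_exists_getVert.mp hw
    rcases Nat.eq_zero_or_pos i with rfl | hipos
    · -- extend at start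
      rw [Walk.getVert_zero] at htw
      have hq' : (Walk.cons htw p).IsPath := (Walk.cons_isPath_iff _ _).mpr ⟨hp, ht⟩
      have := hmax _ hq'
      simp only [Walk.length_cons] at this
      omega
    rcases eq_or_lt_of_le hi with rfl | hilt
    · -- extend at end
      rw [Walk.getVert_length] at htw
      have hq' : (Walk.cons htw p.reverse).IsPath :=
        (Walk.cons_isPath_iff _ _).mpr ⟨hp.reverse, by
          rw [Walk.support_reverse, List.mem_reverse]; exact ht⟩
      have := hmax _ hq'
      simp only [Walk.length_cons, Walk.length_reverse] at this
      omega
    · -- interior vertex gets degree 3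
      obtain ⟨i, rfl⟩ := Nat.exists_eq_succ_of_ne_zero (by omega : i ≠ 0)
      have h1 : H.Adj (p.getVert (i+1)) (p.getVert i) :=
        (p.adj_getVert_succ (by omega)).symm
      have h2 : H.Adj (p.getVert (i+1)) (p.getVert (i+2)) :=
        p.adj_getVert_succ (by omega)
      have h3 : H.Adj (p.getVert (i+1)) t := htw.symm
      have d12 : p.getVert i ≠ p.getVert (i+2) := getVert_injOn hp (by omega) (by omega)
      have d1t : p.getVert i ≠ t := fun hEq => ht (hEq ▸ getVert_mem_support p (by omega))
      have d2t : p.getVert (i+2) ≠ t := fun hEq => ht (hEq ▸ getVert_mem_support p (by omega))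
      exact absurd (hdeg (p.getVert (i+1)))
        (by have := three_le_ncard_neighborSet d12 d1t d2t h1 h2 h3; omega)
  -- the canonical bijection
  have hinj : Function.Injective (fun i : Fin (N+1) => p.getVert i) := by
    intro i j hij
    by_contra hne'
    rcases lt_or_gt_of_ne (fun hc : (i:ℕ) = (j:ℕ) => hne' (Fin.ext hc)) with h | h
    · exact getVert_injOn hp h (by omega) hij
    · exact getVert_injOn hp h (by omega) hij.symm
  have hsurj : Function.Surjective (fun i : Fin (N+1) => p.getVert i) := by
    intro z
    obtain ⟨i, hiz, hi⟩ := Walk.mem_support_iff_exists_getVert.mp (hcover z)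
    exact ⟨⟨i, by omega⟩, hiz⟩
  let e : Fin (N+1) ≃ W := Equiv.ofBijective _ ⟨hinj, hsurj⟩
  have he : ∀ i : Fin (N+1), e i = p.getVert i := fun _ => rfl
  -- key claim
  have key : ∀ i j : ℕ, i < j → j ≤ N → H.Adj (p.getVert i) (p.getVert j) →
      j = i + 1 ∨ (i = 0 ∧ j = N ∧ 2 ≤ N) := by
    intro i j hij hj hadj
    by_cases hji : j = i + 1
    · exact Or.inl hji
    have hij2 : i + 2 ≤ j := by omega
    rcases Nat.eq_zero_or_pos i with rfl | hipos
    · rcases eq_or_lt_of_le hj with rfl | hjlt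
      · exact Or.inr ⟨rfl, rfl, by omega⟩
      · exfalso
        obtain ⟨j, rfl⟩ := Nat.exists_eq_succ_of_ne_zero (by omega : j ≠ 0)
        have h1 : H.Adj (p.getVert (j+1)) (p.getVert j) :=
          (p.adj_getVert_succ (by omega)).symm
        have h2 : H.Adj (p.getVert (j+1)) (p.getVert (j+2)) :=
          p.adj_getVert_succ (by omega)
        have h3 : H.Adj (p.getVert (j+1)) (p.getVert 0) := hadj.symm
        have d12 : p.getVert j ≠ p.getVert (j+2) := getVert_injOn hp (by omega) (by omega)
        have d10 : p.getVert j ≠ p.getVert 0 := (getVert_injOn hp (by omega) (by omega)).symm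
        have d20 : p.getVert (j+2) ≠ p.getVert 0 := (getVert_injOn hp (by omega) (by omega)).symm
        exact absurd (hdeg (p.getVert (j+1)))
          (by have := three_le_ncard_neighborSet d12 d10 d20 h1 h2 h3; omega)
    · exfalso
      obtain ⟨i, rfl⟩ := Nat.exists_eq_succ_of_ne_zero (by omega : i ≠ 0)
      have h1 : H.Adj (p.getVert (i+1)) (p.getVert i) :=
        (p.adj_getVert_succ (by omega)).symm
      have h2 : H.Adj (p.getVert (i+1)) (p.getVert (i+2)) :=
        p.adj_getVert_succ (by omega)
      have h3 : H.Adj (p.getVert (i+1)) (p.getVert j) := hadj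
      have d12 : p.getVert i ≠ p.getVert (i+2) := getVert_injOn hp (by omega) (by omega)
      have d1j : p.getVert i ≠ p.getVert j := getVert_injOn hp (by omega) (by omega)
      have d2j : p.getVert (i+2) ≠ p.getVert j := getVert_injOn hp (by omega) (by omega)
      exact absurd (hdeg (p.getVert (i+1)))
        (by have := three_le_ncard_neighborSet d12 d1j d2j h1 h2 h3; omega)
  by_cases hcyc : H.Adj x y ∧ 2 ≤ N
  · -- cycle graph
    right
    refine ⟨N + 1, ⟨?_⟩⟩
    refine RelIso.symm ⟨e, ?_⟩
    intro i j
    rw [he, he]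
    rw [cycleGraph_adj', fin_succ_val (by omega) i j, fin_succ_val (by omega) j i]
    constructor
    · intro hadj
      have hne' : (i : ℕ) ≠ (j : ℕ) := by
        intro hc
        exact H.irrefl (by rwa [show i = j from Fin.ext hc] at hadj)
      rcases lt_or_gt_of_ne hne' with h | h
      · rcases key i j h (by omega) hadj with h' | ⟨h0, hN', -⟩
        · exact Or.inr (Or.inr h')
        · exact Or.inl (Or.inl ⟨hN', h0⟩)
      · rcases key j i h (by omega) hadj.symm with h' | ⟨h0, hN', -⟩
        · exact Or.inl (Or.inr h')
        · exact Or.inr (Or.inl ⟨hN', h0⟩)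
    · rintro ((⟨hj, hi⟩ | hi) | (⟨hi, hj⟩ | hj))
      · -- j = N, i = 0 : edge y -- x
        have hx' : p.getVert i = x := by rw [hi]; exact p.getVert_zero
        have hy' : p.getVert j = y := by rw [hj, hN]; exact p.getVert_length
        rw [hx', hy']; exact hcyc.1
      · -- i = j + 1
        have := p.adj_getVert_succ (i := (j:ℕ)) (by omega)
        rw [← hi] at this
        exact this.symm
      · have hx' : p.getVert j = x := by rw [hj]; exact p.getVert_zero
        have hy' : p.getVert i = y := by rw [hi, hN]; exact p.getVert_length
        rw [hx', hy']; exact hcyc.1.symm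
      · have := p.adj_getVert_succ (i := (i:ℕ)) (by omega)
        rw [← hj] at this
        exact this
  · -- path graph
    left
    refine ⟨N + 1, ⟨?_⟩⟩
    refine RelIso.symm ⟨e, ?_⟩
    intro i j
    rw [he, he, pathGraph_adj]
    constructor
    · intro hadj
      have hne' : (i : ℕ) ≠ (j : ℕ) := by
        intro hc
        exact H.irrefl (by rwa [show i = j from Fin.ext hc] at hadj)
      rcases lt_or_gt_of_ne hne' with h | h
      · rcases key i j h (by omega) hadj with h' | ⟨h0, hN', h2⟩
        · exact Or.inl h'.symm
        · exfalso
          have hx' : p.getVert (i:ℕ) = x := by rw [h0]; exact p.getVert_zero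
          have hy' : p.getVert (j:ℕ) = y := by rw [hN', hN]; exact p.getVert_length
          rw [hx', hy'] at hadj
          exact hcyc ⟨hadj, h2⟩
      · rcases key j i h (by omega) hadj.symm with h' | ⟨h0, hN', h2⟩
        · exact Or.inr h'.symm
        · exfalso
          have hx' : p.getVert (j:ℕ) = x := by rw [h0]; exact p.getVert_zero
          have hy' : p.getVert (i:ℕ) = y := by rw [hN', hN]; exact p.getVert_length
          rw [hx', hy'] at hadj
          exact hcyc ⟨hadj.symm, h2⟩
    · rintro (h | h)
      · have := p.adj_getVert_succ (i := (i:ℕ)) (by omega)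
        rw [h] at this
        exact this
      · have := p.adj_getVert_succ (i := (j:ℕ)) (by omega)
        rw [h] at this
        exact this.symm



lemma exists_walk_getVert {u v : W} (p : H.Walk u v) {i : ℕ} (hi : i ≤ p.length) :
    ∃ q : H.Walk u (p.getVert i), q.length = i := by
  induction p generalizing i with
  | nil =>
    have : i = 0 := by simpa using hi
    subst this
    exact ⟨Walk.nil.copy rfl rfl, rfl⟩
  | cons h q ih =>
    rcases Nat.eq_zero_or_pos i with rfl | hpos
    · exact ⟨Walk.nil.copy rfl (Walk.getVert_zero _).symm, rfl⟩
    · obtain ⟨i, rfl⟩ := Nat.exists_eq_succ_of_ne_zero (by omega : i ≠ 0)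
      obtain ⟨q', hq'⟩ := ih (i := i) (by simp only [Walk.length_cons] at hi; omega)
      exact ⟨(Walk.cons h q').copy rfl (by rw [Walk.getVert_cons_succ]),
        by simp [hq']⟩


lemma dist_getVert_le {u v : W} (p : H.Walk u v) {i : ℕ} (hi : i ≤ p.length) :
    H.dist u (p.getVert i) ≤ i := by
  obtain ⟨q, hq⟩ := exists_walk_getVert p hi
  calc H.dist u (p.getVert i) ≤ q.length := SimpleGraph.dist_le q
    _ = i := hq


lemma reachable_getVert {u v : W} (p : H.Walk u v) {i : ℕ} (hi : i ≤ p.length) :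
    H.Reachable u (p.getVert i) := by
  obtain ⟨q, _⟩ := exists_walk_getVert p hi
  exact ⟨q⟩


lemma ncard_neighborSet_eq_two [Fintype W] {w x y : W} (hxy : x ≠ y)
    (hx : H.Adj w x) (hy : H.Adj w y) (hle : (H.neighborSet w).ncard ≤ 2) :
    (H.neighborSet w).ncard = 2 := by
  refine le_antisymm hle ?_
  calc 2 = ({x, y} : Set W).ncard := (Set.ncard_pair hxy).symm
    _ ≤ _ := Set.ncard_le_ncard (by intro t ht; rcases ht with rfl | rfl <;> assumption)
        (Set.toFinite _)



variable {W : Type*} {H : SimpleGraph W}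

-- placeholders for already-proven lemmas

lemma ncard_neighborSet_induce (s : Set W) (w : ↥s) :
    ((H.induce s).neighborSet w).ncard = (H.neighborSet ↑w ∩ s).ncard := by
  rw [← Set.ncard_image_of_injective _ (Subtype.val_injective (p := fun z => z ∈ s))]
  congr 1
  ext z
  constructor
  · rintro ⟨⟨z', hz'⟩, hadj, rfl⟩
    exact ⟨hadj, hz'⟩
  · rintro ⟨hadj, hz⟩
    exact ⟨⟨z, hz⟩, hadj, rfl⟩

lemma connected_induce_supp (c : H.ConnectedComponent) :
    (H.induce c.supp).Connected := by
  classical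
  obtain ⟨a, rfl⟩ := c.exists_rep
  have ha : a ∈ (H.connectedComponentMk a).supp := rfl
  apply induce_connected_of_patches a ha
  intro z hz
  have hreach : H.Reachable a z :=
    (ConnectedComponent.exact ((ConnectedComponent.mem_supp_iff _ _).mp hz)).symm
  obtain ⟨q⟩ := hreach
  refine ⟨{w | w ∈ q.support}, ?_, q.start_mem_support, q.end_mem_support, ?_⟩
  · intro t ht
    rw [ConnectedComponent.mem_supp_iff]
    have : H.Reachable t a := ⟨(q.takeUntil t ht).reverse⟩
    exact ConnectedComponent.sound this
  · exact (q.connected_induce_support).preconnected _ _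

lemma mem_supp_of_adj {c : H.ConnectedComponent} {w z : W} (hw : w ∈ c.supp)
    (hadj : H.Adj w z) : z ∈ c.supp := by
  rw [ConnectedComponent.mem_supp_iff] at hw ⊢
  rw [← hw]
  exact (ConnectedComponent.connectedComponentMk_eq_of_adj hadj).symm


/-- Lemma A: dichotomy. -/
lemma dichotomy [Fintype W] (H : SimpleGraph W) (a b a' b' : W)
    (hab : H.Adj a b) (hNa : H.neighborSet a = {b, a'}) (hNb : H.neighborSet b = {a, b'})
    (hba' : b ≠ a') (hab' : a ≠ b') (ha'b' : a' ≠ b') :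
    (∃ c : H.ConnectedComponent, 4 ≤ c.supp.ncard ∧
      ((∃ n, Nonempty (H.induce c.supp ≃g pathGraph n)) ∨
       (∃ n, Nonempty (H.induce c.supp ≃g cycleGraph n)))) ∨
    (∃ y y1 y2 y3 : W, H.Adj y y1 ∧ H.Adj y1 y2 ∧ H.Adj y2 y3 ∧ y ≠ y3 ∧
      3 ≤ (H.neighborSet y).ncard ∧
      (H.neighborSet y1).ncard = 2 ∧ (H.neighborSet y2).ncard = 2) := by
  classical
  have haa' : H.Adj a a' := by
    have : a' ∈ H.neighborSet a := by rw [hNa]; exact Or.inr rfl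
    exact this
  have hbb' : H.Adj b b' := by
    have : b' ∈ H.neighborSet b := by rw [hNb]; exact Or.inr rfl
    exact this
  have hdega : (H.neighborSet a).ncard = 2 := by rw [hNa]; exact Set.ncard_pair hba'
  have hdegb : (H.neighborSet b).ncard = 2 := by rw [hNb]; exact Set.ncard_pair hab'
  by_cases hcase : ∀ w, H.Reachable a w → (H.neighborSet w).ncard ≤ 2
  · left
    refine ⟨H.connectedComponentMk a, ?_, ?_⟩
    · have hsub : ({a, b, a', b'} : Set W) ⊆ (H.connectedComponentMk a).supp := by
        have hamem : a ∈ (H.connectedComponentMk a).supp := rfl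
        intro t ht
        rcases ht with rfl | rfl | rfl | rfl
        · exact hamem
        · exact mem_supp_of_adj hamem hab
        · exact mem_supp_of_adj hamem haa'
        · exact mem_supp_of_adj (mem_supp_of_adj hamem hab) hbb'
      calc (4:ℕ) = ({a, b, a', b'} : Set W).ncard := by
            rw [Set.ncard_insert_of_notMem (by
                simp only [Set.mem_insert_iff, Set.mem_singleton_iff]
                push_neg
                exact ⟨hab.ne, haa'.ne, hab'⟩) (Set.toFinite _),
              Set.ncard_insert_of_notMem (by
                simp only [Set.mem_insert_iff, Set.mem_singleton_iff]
                push_neg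
                exact ⟨hba', hbb'.ne⟩) (Set.toFinite _),
              Set.ncard_pair ha'b']
        _ ≤ _ := Set.ncard_le_ncard hsub (Set.toFinite _)
    · apply path_or_cycle (connected_induce_supp _)
      intro w
      rw [ncard_neighborSet_induce]
      have hreach : H.Reachable a ↑w := by
        have := (ConnectedComponent.mem_supp_iff _ _).mp w.2
        exact (ConnectedComponent.exact this).symm
      calc (H.neighborSet ↑w ∩ _).ncard ≤ (H.neighborSet (w:W)).ncard :=
            Set.ncard_le_ncard Set.inter_subset_left (Set.toFinite _)
        _ ≤ 2 := hcase _ hreach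
  · right
    push_neg at hcase
    obtain ⟨w0, hw0r, hw0d⟩ := hcase
    set K : Set ℕ :=
      {n | ∃ w, H.Reachable a w ∧ 3 ≤ (H.neighborSet w).ncard ∧ H.dist a w = n} with hK
    have hKne : K.Nonempty := ⟨_, w0, hw0r, by omega, rfl⟩
    obtain ⟨w, hwreach, hwdeg, hwdist⟩ : sInf K ∈ K := Nat.sInf_mem hKne
    set k := sInf K with hk
    have hmin' : ∀ z, H.Reachable a z → H.dist a z < k → (H.neighborSet z).ncard ≤ 2 := by
      intro z hz hd
      by_contra hz3
      have hmem : H.dist a z ∈ K := ⟨z, hz, by omega, rfl⟩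
      have := Nat.sInf_le hmem
      omega
    obtain ⟨p, hp, hplen⟩ := hwreach.exists_path_of_dist
    rw [hwdist] at hplen
    have hdeg_lt : ∀ i, i < k → (H.neighborSet (p.getVert i)).ncard ≤ 2 := by
      intro i hi
      have hile : i ≤ p.length := by omega
      exact hmin' _ (reachable_getVert p hile)
        (lt_of_le_of_lt (dist_getVert_le p hile) hi)
    have hadjp : ∀ i, i < k → H.Adj (p.getVert i) (p.getVert (i+1)) := by
      intro i hi
      exact p.adj_getVert_succ (by omega)
    have hinj : ∀ i j, i < j → j ≤ k → p.getVert i ≠ p.getVert j := by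
      intro i j hij hj
      exact getVert_injOn hp hij (by omega)
    have hdeg_int : ∀ i, i + 2 ≤ k → (H.neighborSet (p.getVert (i+1))).ncard = 2 := by
      intro i hi
      exact ncard_neighborSet_eq_two (hinj i (i+2) (by omega) (by omega))
        (hadjp i (by omega)).symm (hadjp (i+1) (by omega)) (hdeg_lt (i+1) (by omega))
    have hwv : p.getVert k = w := by
      rw [show k = p.length by omega]
      exact p.getVert_length
    match hk2 : k, hwdist, hplen, hwv with
    | 0, hwdist, hplen, hwv =>
      rw [p.getVert_zero] at hwv
      rw [← hwv] at hwdeg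
      omega
    | 1, hwdist, hplen, hwv =>
      have h01 : H.Adj a (p.getVert 1) := by
        have := hadjp 0 (by omega)
        rwa [p.getVert_zero] at this
      rw [hwv] at h01
      have hmem : w ∈ H.neighborSet a := h01
      rw [hNa] at hmem
      rcases hmem with h | h
      · rw [h] at hwdeg; omega
      · rw [h] at hwdeg
        exact ⟨a', a, b, b', haa'.symm, hab, hbb', ha'b', hwdeg, hdega, hdegb⟩
    | 2, hwdist, hplen, hwv =>
      have h01 : H.Adj a (p.getVert 1) := by
        have := hadjp 0 (by omega)
        rwa [p.getVert_zero] at this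
      have h12 : H.Adj (p.getVert 1) w := by
        have := hadjp 1 (by omega)
        rwa [hwv] at this
      have hy1deg : (H.neighborSet (p.getVert 1)).ncard = 2 := hdeg_int 0 (by omega)
      have hda' : (H.neighborSet a').ncard ≤ 2 := by
        refine hmin' a' haa'.reachable ?_
        have : H.dist a a' ≤ 1 := by
          have := SimpleGraph.dist_le (Walk.cons haa' Walk.nil)
          simpa using this
        omega
      have hmem : p.getVert 1 ∈ H.neighborSet a := h01
      rw [hNa] at hmem
      rcases hmem with h1b | h1a'
      · rw [h1b] at h12 hy1deg
        refine ⟨w, b, a, a', h12.symm, hab.symm, haa', ?_, hwdeg, hdegb, hdega⟩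
        intro h
        rw [h] at hwdeg
        omega
      · rw [h1a'] at h12 hy1deg
        refine ⟨w, a', a, b, h12.symm, haa'.symm, hab, ?_, hwdeg, hy1deg, hdega⟩
        intro h
        rw [h] at hwdeg
        omega
    | (m+3), hwdist, hplen, hwv =>
      have adj3 : H.Adj (p.getVert (m+2)) w := by
        have := hadjp (m+2) (by omega)
        rwa [hwv] at this
      have adj2 : H.Adj (p.getVert (m+1)) (p.getVert (m+2)) := hadjp (m+1) (by omega)
      have adj1 : H.Adj (p.getVert m) (p.getVert (m+1)) := hadjp m (by omega)
      refine ⟨w, p.getVert (m+2), p.getVert (m+1), p.getVert m,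
        adj3.symm, adj2.symm, adj1.symm, ?_, hwdeg,
        hdeg_int (m+1) (by omega), hdeg_int m (by omega)⟩
      exact fun h => hinj m (m+3) (by omega) le_rfl (hwv.trans h).symm



variable {W : Type*} {H : SimpleGraph W}


/-- Lemma B : dichotomy in terms of an ambient graph and a vertex subset. -/
lemma dichotomy_set {V : Type*} [Fintype V] (G : SimpleGraph V) (s : Set V)
    (a b a' b' : V) (ha : a ∈ s) (hb : b ∈ s) (ha' : a' ∈ s) (hb' : b' ∈ s)
    (hab : G.Adj a b)
    (hNa : G.neighborSet a ∩ s = {b, a'}) (hNb : G.neighborSet b ∩ s = {a, b'})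
    (hba' : b ≠ a') (hab' : a ≠ b') (ha'b' : a' ≠ b') :
    (∃ c : (G.induce s).ConnectedComponent, 4 ≤ c.supp.ncard ∧
      ((∃ n, Nonempty ((G.induce s).induce c.supp ≃g pathGraph n)) ∨
       (∃ n, Nonempty ((G.induce s).induce c.supp ≃g cycleGraph n)))) ∨
    (∃ y y1 y2 y3 : V, ChainInInduced G s y y1 y2 y3) := by
  classical
  haveI : Fintype ↥s := Fintype.ofFinite _
  have hGaa' : G.Adj a a' := by
    have : a' ∈ G.neighborSet a ∩ s := by rw [hNa]; exact Or.inr rfl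
    exact this.1
  have hGbb' : G.Adj b b' := by
    have : b' ∈ G.neighborSet b ∩ s := by rw [hNb]; exact Or.inr rfl
    exact this.1
  have hNA : (G.induce s).neighborSet ⟨a, ha⟩ = {⟨b, hb⟩, ⟨a', ha'⟩} := by
    ext z
    simp only [mem_neighborSet, comap_adj, Function.Embedding.coe_subtype,
      Set.mem_insert_iff, Set.mem_singleton_iff]
    constructor
    · intro hz
      have hmem : (z : V) ∈ G.neighborSet a ∩ s := ⟨hz, z.2⟩
      rw [hNa] at hmem
      rcases hmem with h | h
      · exact Or.inl (Subtype.ext h)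
      · exact Or.inr (Subtype.ext h)
    · rintro (rfl | rfl)
      · exact hab
      · exact hGaa'
  have hNB : (G.induce s).neighborSet ⟨b, hb⟩ = {⟨a, ha⟩, ⟨b', hb'⟩} := by
    ext z
    simp only [mem_neighborSet, comap_adj, Function.Embedding.coe_subtype,
      Set.mem_insert_iff, Set.mem_singleton_iff]
    constructor
    · intro hz
      have hmem : (z : V) ∈ G.neighborSet b ∩ s := ⟨hz, z.2⟩
      rw [hNb] at hmem
      rcases hmem with h | h
      · exact Or.inl (Subtype.ext h)
      · exact Or.inr (Subtype.ext h)
    · rintro (rfl | rfl)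
      · exact hab.symm
      · exact hGbb'
  rcases dichotomy (G.induce s) ⟨a, ha⟩ ⟨b, hb⟩ ⟨a', ha'⟩ ⟨b', hb'⟩ hab hNA hNB
      (fun h => hba' (congrArg Subtype.val h)) (fun h => hab' (congrArg Subtype.val h))
      (fun h => ha'b' (congrArg Subtype.val h)) with h | h
  · exact Or.inl h
  · obtain ⟨y, y1, y2, y3, h1, h2, h3, hne, d0, d1, d2⟩ := h
    refine Or.inr ⟨y, y1, y2, y3, y.2, y1.2, y2.2, y3.2, h1, h2, h3,
      (fun h => hne (Subtype.ext h)), ?_, ?_, ?_⟩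
    · rw [← ncard_neighborSet_induce]; exact d0
    · rw [← ncard_neighborSet_induce]; exact d1
    · rw [← ncard_neighborSet_induce]; exact d2

/-- The neighborhood structure of the `uᵢ`. -/
lemma nbhd_struct {V : Type*} (G : SimpleGraph V) (v a b c d a' : V)
    (hNv : G.neighborSet v = {a, b, c, d})
    (hab : G.Adj a b) (hac : ¬ G.Adj a c) (had : ¬ G.Adj a d)
    (hout : G.neighborSet a \ insert v (G.neighborSet v) = {a'}) :
    G.neighborSet a = {v, b, a'} ∧ a' ∉ insert v (G.neighborSet v) := by
  have hva : G.Adj v a := by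
    have : a ∈ G.neighborSet v := by rw [hNv]; exact Or.inl rfl
    exact this
  have ha'mem : a' ∈ G.neighborSet a \ insert v (G.neighborSet v) := by
    rw [hout]; rfl
  refine ⟨?_, ha'mem.2⟩
  ext z
  simp only [Set.mem_insert_iff, Set.mem_singleton_iff, mem_neighborSet]
  constructor
  · intro hz
    by_cases hzin : z ∈ insert v (G.neighborSet v)
    · rcases hzin with rfl | hzin
      · exact Or.inl rfl
      · rw [hNv] at hzin
        rcases hzin with rfl | rfl | rfl | rfl
        · exact absurd hz (G.irrefl)
        · exact Or.inr (Or.inl rfl)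
        · exact absurd hz hac
        · exact absurd hz had
    · have : z ∈ G.neighborSet a \ insert v (G.neighborSet v) := ⟨hz, hzin⟩
      rw [hout] at this
      exact Or.inr (Or.inr this)
  · rintro (rfl | rfl | rfl)
    · exact hva.symm
    · exact hab
    · exact ha'mem.1




def MainConcl {V : Type*} (G : SimpleGraph V) (v : V) : Prop :=
  ∃ x x1 x2 x3 : V, ChainInInduced G ({v}ᶜ : Set V) x x1 x2 x3 ∧
    ((∃ c : (G.induce ({v, x, x1, x2, x3}ᶜ : Set V)).ConnectedComponent,
        4 ≤ c.supp.ncard ∧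
        ((∃ n : ℕ, Nonempty
            ((G.induce ({v, x, x1, x2, x3}ᶜ : Set V)).induce c.supp ≃g
              SimpleGraph.pathGraph n)) ∨
         (∃ n : ℕ, Nonempty
            ((G.induce ({v, x, x1, x2, x3}ᶜ : Set V)).induce c.supp ≃g
              SimpleGraph.cycleGraph n)))) ∨
     (∃ y y1 y2 y3 : V,
        ChainInInduced G ({v, x, x1, x2, x3}ᶜ : Set V) y y1 y2 y3))


lemma triple_inter {V : Type*} (v p q : V) (s : Set V) (hv : v ∉ s)
    (hp : p ∈ s) (hq : q ∈ s) : ({v, p, q} : Set V) ∩ s = {p, q} := by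
  ext w
  simp only [Set.mem_inter_iff, Set.mem_insert_iff, Set.mem_singleton_iff]
  constructor
  · rintro ⟨(rfl | rfl | rfl), hw⟩
    · exact absurd hw hv
    · exact Or.inl rfl
    · exact Or.inr rfl
  · rintro (rfl | rfl)
    · exact ⟨Or.inr (Or.inl rfl), hp⟩
    · exact ⟨Or.inr (Or.inr rfl), hq⟩

section Helpers
variable {V : Type*} [Fintype V] (G : SimpleGraph V)

lemma helperA (v a b c d a' b' c' d' : V)
    (hNv : G.neighborSet v = {a, b, c, d})
    (hab : G.Adj a b) (hcd : G.Adj c d)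
    (hac : ¬G.Adj a c) (had : ¬G.Adj a d) (hbc : ¬G.Adj b c) (hbd : ¬G.Adj b d)
    (houta : G.neighborSet a \ insert v (G.neighborSet v) = {a'})
    (houtb : G.neighborSet b \ insert v (G.neighborSet v) = {b'})
    (houtc : G.neighborSet c \ insert v (G.neighborSet v) = {c'})
    (houtd : G.neighborSet d \ insert v (G.neighborSet v) = {d'})
    (hd1 : a' ≠ b') (hd2 : a' ≠ c') (hd3 : a' ≠ d')
    (hd4 : b' ≠ c') (hd5 : b' ≠ d') (hd6 : c' ≠ d')
    (h3 : 3 ≤ (G.neighborSet a').ncard) :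
    MainConcl G v := by
  classical
  have hNv2 : G.neighborSet v = {b, a, c, d} := by
    rw [hNv]; ext z
    simp only [Set.mem_insert_iff, Set.mem_singleton_iff]; tauto
  have hNv3 : G.neighborSet v = {c, d, a, b} := by
    rw [hNv]; ext z
    simp only [Set.mem_insert_iff, Set.mem_singleton_iff]; tauto
  have hNv4 : G.neighborSet v = {d, c, a, b} := by
    rw [hNv]; ext z
    simp only [Set.mem_insert_iff, Set.mem_singleton_iff]; tauto
  obtain ⟨Na, ha'out⟩ := nbhd_struct G v a b c d a' hNv hab hac had houta
  obtain ⟨Nb, hb'out⟩ := nbhd_struct G v b a c d b' hNv2 hab.symm hbc hbd houtb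
  obtain ⟨Nc, hc'out⟩ := nbhd_struct G v c d a b c' hNv3 hcd
    (fun h => hac h.symm) (fun h => hbc h.symm) houtc
  obtain ⟨Nd, hd'out⟩ := nbhd_struct G v d c a b d' hNv4 hcd.symm
    (fun h => had h.symm) (fun h => hbd h.symm) houtd
  -- basic membership facts
  have haNv : a ∈ G.neighborSet v := by rw [hNv]; exact Or.inl rfl
  have hbNv : b ∈ G.neighborSet v := by rw [hNv]; exact Or.inr (Or.inl rfl)
  have hcNv : c ∈ G.neighborSet v := by rw [hNv]; exact Or.inr (Or.inr (Or.inl rfl))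
  have hdNv : d ∈ G.neighborSet v := by rw [hNv]; exact Or.inr (Or.inr (Or.inr rfl))
  have ha'v : a' ≠ v := fun h => ha'out (h ▸ Set.mem_insert _ _)
  have hb'v : b' ≠ v := fun h => hb'out (h ▸ Set.mem_insert _ _)
  have hc'v : c' ≠ v := fun h => hc'out (h ▸ Set.mem_insert _ _)
  have hd'v : d' ≠ v := fun h => hd'out (h ▸ Set.mem_insert _ _)
  have ha'Nv : a' ∉ G.neighborSet v := fun h => ha'out (Set.mem_insert_of_mem _ h)
  have hb'Nv : b' ∉ G.neighborSet v := fun h => hb'out (Set.mem_insert_of_mem _ h)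
  have hc'Nv : c' ∉ G.neighborSet v := fun h => hc'out (Set.mem_insert_of_mem _ h)
  have hd'Nv : d' ∉ G.neighborSet v := fun h => hd'out (Set.mem_insert_of_mem _ h)
  have hav : a ≠ v := (Adj.ne' haNv)
  have hbv : b ≠ v := (Adj.ne' hbNv)
  have hcv : c ≠ v := (Adj.ne' hcNv)
  have hdv : d ≠ v := (Adj.ne' hdNv)
  have hGaa' : G.Adj a a' := by
    have : a' ∈ G.neighborSet a := by rw [Na]; exact Or.inr (Or.inr rfl)
    exact this
  have hGbb' : G.Adj b b' := by
    have : b' ∈ G.neighborSet b := by rw [Nb]; exact Or.inr (Or.inr rfl)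
    exact this
  have hGcc' : G.Adj c c' := by
    have : c' ∈ G.neighborSet c := by rw [Nc]; exact Or.inr (Or.inr rfl)
    exact this
  have hGdd' : G.Adj d d' := by
    have : d' ∈ G.neighborSet d := by rw [Nd]; exact Or.inr (Or.inr rfl)
    exact this
  -- distinctness
  have hba' : b ≠ a' := fun h => ha'Nv (h ▸ hbNv)
  have hca' : c ≠ a' := fun h => ha'Nv (h ▸ hcNv)
  have hda' : d ≠ a' := fun h => ha'Nv (h ▸ hdNv)
  have hab2 : a ≠ b' := fun h => hb'Nv (h ▸ haNv)
  have hcb' : c ≠ b' := fun h => hb'Nv (h ▸ hcNv)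
  have hdb' : d ≠ b' := fun h => hb'Nv (h ▸ hdNv)
  have hdc' : d ≠ c' := fun h => hc'Nv (h ▸ hdNv)
  have hcd2 : c ≠ d' := fun h => hd'Nv (h ▸ hcNv)
  have hca : c ≠ a := fun h => had (h ▸ hcd)
  have hda : d ≠ a := fun h => hac ((h ▸ hcd).symm)
  have hcb : c ≠ b := fun h => hbd (h ▸ hcd)
  have hdb : d ≠ b := fun h => hbc ((h ▸ hcd).symm)
  have hc'a : c' ≠ a := fun h => hc'Nv (h ▸ haNv)
  have hc'b : c' ≠ b := fun h => hc'Nv (h ▸ hbNv)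
  have hd'a : d' ≠ a := fun h => hd'Nv (h ▸ haNv)
  have hd'b : d' ≠ b := fun h => hd'Nv (h ▸ hbNv)
  -- intersections with {v}ᶜ
  have hvNa' : v ∉ G.neighborSet a' := fun h => ha'Nv (Adj.symm h)
  have hNa'int : G.neighborSet a' ∩ ({v}ᶜ : Set V) = G.neighborSet a' :=
    Set.inter_eq_self_of_subset_left (by
      intro z hz
      simp only [Set.mem_compl_iff, Set.mem_singleton_iff]
      rintro rfl
      exact hvNa' hz)
  have hNaint : G.neighborSet a ∩ ({v}ᶜ : Set V) = {b, a'} := by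
    rw [Na]
    exact triple_inter v b a' _ (by simp) (by simp [hbv]) (by simp [ha'v])
  have hNbint : G.neighborSet b ∩ ({v}ᶜ : Set V) = {a, b'} := by
    rw [Nb]
    exact triple_inter v a b' _ (by simp) (by simp [hav]) (by simp [hb'v])
  refine ⟨a', a, b, b',
    ⟨by simp [ha'v], by simp [hav], by simp [hbv], by simp [hb'v],
     hGaa'.symm, hab, hGbb', hd1,
     by rw [hNa'int]; exact h3,
     by rw [hNaint]; exact Set.ncard_pair hba',
     by rw [hNbint]; exact Set.ncard_pair hab2⟩, ?_⟩
  -- apply the dichotomy on the other side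
  have hvs : v ∉ ({v, a', a, b, b'}ᶜ : Set V) := by simp
  have hcs : c ∈ ({v, a', a, b, b'}ᶜ : Set V) := by
    simp only [Set.mem_compl_iff, Set.mem_insert_iff, Set.mem_singleton_iff]
    push_neg
    exact ⟨hcv, hca', hca, hcb, hcb'⟩
  have hds : d ∈ ({v, a', a, b, b'}ᶜ : Set V) := by
    simp only [Set.mem_compl_iff, Set.mem_insert_iff, Set.mem_singleton_iff]
    push_neg
    exact ⟨hdv, hda', hda, hdb, hdb'⟩
  have hc's : c' ∈ ({v, a', a, b, b'}ᶜ : Set V) := by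
    simp only [Set.mem_compl_iff, Set.mem_insert_iff, Set.mem_singleton_iff]
    push_neg
    exact ⟨hc'v, hd2.symm, hc'a, hc'b, hd4.symm⟩
  have hd's : d' ∈ ({v, a', a, b, b'}ᶜ : Set V) := by
    simp only [Set.mem_compl_iff, Set.mem_insert_iff, Set.mem_singleton_iff]
    push_neg
    exact ⟨hd'v, hd3.symm, hd'a, hd'b, hd5.symm⟩
  have hNcint : G.neighborSet c ∩ ({v, a', a, b, b'}ᶜ : Set V) = {d, c'} := by
    rw [Nc]
    exact triple_inter v d c' _ hvs hds hc's
  have hNdint : G.neighborSet d ∩ ({v, a', a, b, b'}ᶜ : Set V) = {c, d'} := by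
    rw [Nd]
    exact triple_inter v c d' _ hvs hcs hd's
  exact dichotomy_set G ({v, a', a, b, b'}ᶜ : Set V) c d c' d' hcs hds hc's hd's hcd
    hNcint hNdint hdc' hcd2 hd6

lemma helperB (v a b c d a' b' c' d' : V)
    (hdeg2 : ∀ w : V, (G.neighborSet w).ncard = 2 →
      (∀ z ∈ G.neighborSet w, 3 ≤ (G.neighborSet z).ncard) ∧
      (∀ z1 z2 : V, z1 ∈ G.neighborSet w → z2 ∈ G.neighborSet w → z1 ≠ z2 → ¬ G.Adj z1 z2))
    (hNv : G.neighborSet v = {a, b, c, d})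
    (hab : G.Adj a b) (hcd : G.Adj c d)
    (hac : ¬G.Adj a c) (had : ¬G.Adj a d) (hbc : ¬G.Adj b c) (hbd : ¬G.Adj b d)
    (houta : G.neighborSet a \ insert v (G.neighborSet v) = {a'})
    (houtb : G.neighborSet b \ insert v (G.neighborSet v) = {b'})
    (houtc : G.neighborSet c \ insert v (G.neighborSet v) = {c'})
    (houtd : G.neighborSet d \ insert v (G.neighborSet v) = {d'})
    (hd1 : a' ≠ b') (hd2 : a' ≠ c') (hd3 : a' ≠ d')
    (hd4 : b' ≠ c') (hd5 : b' ≠ d') (hd6 : c' ≠ d')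
    (hda'2 : (G.neighborSet a').ncard = 2)
    (hdc'2 : (G.neighborSet c').ncard = 2) (hdd'2 : (G.neighborSet d').ncard = 2) :
    MainConcl G v := by
  classical
  have hNv2 : G.neighborSet v = {b, a, c, d} := by
    rw [hNv]; ext z
    simp only [Set.mem_insert_iff, Set.mem_singleton_iff]; tauto
  have hNv3 : G.neighborSet v = {c, d, a, b} := by
    rw [hNv]; ext z
    simp only [Set.mem_insert_iff, Set.mem_singleton_iff]; tauto
  have hNv4 : G.neighborSet v = {d, c, a, b} := by
    rw [hNv]; ext z
    simp only [Set.mem_insert_iff, Set.mem_singleton_iff]; tauto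
  obtain ⟨Na, ha'out⟩ := nbhd_struct G v a b c d a' hNv hab hac had houta
  obtain ⟨Nb, hb'out⟩ := nbhd_struct G v b a c d b' hNv2 hab.symm hbc hbd houtb
  obtain ⟨Nc, hc'out⟩ := nbhd_struct G v c d a b c' hNv3 hcd
    (fun h => hac h.symm) (fun h => hbc h.symm) houtc
  obtain ⟨Nd, hd'out⟩ := nbhd_struct G v d c a b d' hNv4 hcd.symm
    (fun h => had h.symm) (fun h => hbd h.symm) houtd
  have haNv : a ∈ G.neighborSet v := by rw [hNv]; exact Or.inl rfl
  have hbNv : b ∈ G.neighborSet v := by rw [hNv]; exact Or.inr (Or.inl rfl)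
  have hcNv : c ∈ G.neighborSet v := by rw [hNv]; exact Or.inr (Or.inr (Or.inl rfl))
  have hdNv : d ∈ G.neighborSet v := by rw [hNv]; exact Or.inr (Or.inr (Or.inr rfl))
  have ha'v : a' ≠ v := fun h => ha'out (h ▸ Set.mem_insert _ _)
  have hc'v : c' ≠ v := fun h => hc'out (h ▸ Set.mem_insert _ _)
  have hd'v : d' ≠ v := fun h => hd'out (h ▸ Set.mem_insert _ _)
  have ha'Nv : a' ∉ G.neighborSet v := fun h => ha'out (Set.mem_insert_of_mem _ h)
  have hc'Nv : c' ∉ G.neighborSet v := fun h => hc'out (Set.mem_insert_of_mem _ h)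
  have hd'Nv : d' ∉ G.neighborSet v := fun h => hd'out (Set.mem_insert_of_mem _ h)
  have hav : a ≠ v := (Adj.ne' haNv)
  have hbv : b ≠ v := (Adj.ne' hbNv)
  have hcv : c ≠ v := (Adj.ne' hcNv)
  have hdv : d ≠ v := (Adj.ne' hdNv)
  have hGaa' : G.Adj a a' := by
    have : a' ∈ G.neighborSet a := by rw [Na]; exact Or.inr (Or.inr rfl)
    exact this
  have hba' : b ≠ a' := fun h => ha'Nv (h ▸ hbNv)
  have hca' : c ≠ a' := fun h => ha'Nv (h ▸ hcNv)
  have hda' : d ≠ a' := fun h => ha'Nv (h ▸ hdNv)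
  have hab2 : a ≠ b' := by
    intro h
    have : b' ∉ G.neighborSet v := fun hh => hb'out (Set.mem_insert_of_mem _ hh)
    exact this (h ▸ haNv)
  have hc'a : c' ≠ a := fun h => hc'Nv (h ▸ haNv)
  have hc'b : c' ≠ b := fun h => hc'Nv (h ▸ hbNv)
  have hd'a : d' ≠ a := fun h => hd'Nv (h ▸ haNv)
  have hd'b : d' ≠ b := fun h => hd'Nv (h ▸ hbNv)
  have hca : c ≠ a := fun h => had (h ▸ hcd)
  have hda : d ≠ a := fun h => hac ((h ▸ hcd).symm)
  have hcb : c ≠ b := fun h => hbd (h ▸ hcd)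
  have hdb : d ≠ b := fun h => hbc ((h ▸ hcd).symm)
  have hdc' : d ≠ c' := fun h => hc'Nv (h ▸ hdNv)
  have hcd2 : c ≠ d' := fun h => hd'Nv (h ▸ hcNv)
  -- extract the second neighbor w of a'
  have hnsub : ¬ (G.neighborSet a' ⊆ {a}) := by
    intro hsub
    have := Set.ncard_le_ncard hsub (Set.toFinite _)
    rw [Set.ncard_singleton] at this
    omega
  obtain ⟨w, hwmem, hwa0⟩ := Set.not_subset.mp hnsub
  have hwa : w ≠ a := fun h => hwa0 (by rw [h]; rfl)
  have hw3 : 3 ≤ (G.neighborSet w).ncard := (hdeg2 a' hda'2).1 w hwmem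
  have hwv : w ≠ v := fun h => ha'Nv (((h ▸ hwmem) : G.Adj a' v).symm)
  have hwb : w ≠ b := by
    intro h
    apply hd1
    have hmem : a' ∈ G.neighborSet b \ insert v (G.neighborSet v) :=
      ⟨((h ▸ hwmem) : G.Adj a' b).symm, ha'out⟩
    rw [houtb] at hmem
    exact hmem
  have hwc : w ≠ c := by
    intro h
    apply hd2
    have hmem : a' ∈ G.neighborSet c \ insert v (G.neighborSet v) :=
      ⟨((h ▸ hwmem) : G.Adj a' c).symm, ha'out⟩
    rw [houtc] at hmem
    exact hmem
  have hwd : w ≠ d := by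
    intro h
    apply hd3
    have hmem : a' ∈ G.neighborSet d \ insert v (G.neighborSet v) :=
      ⟨((h ▸ hwmem) : G.Adj a' d).symm, ha'out⟩
    rw [houtd] at hmem
    exact hmem
  have hwNv : w ∉ G.neighborSet v := by
    rw [hNv]
    rintro (h | h | h | h)
    · exact hwa h
    · exact hwb h
    · exact hwc h
    · exact hwd h
  have hwc' : w ≠ c' := by
    intro h
    rw [h, hdc'2] at hw3
    omega
  have hwd' : w ≠ d' := by
    intro h
    rw [h, hdd'2] at hw3
    omega
  have hwa' : w ≠ a' := fun h => ((h ▸ hwmem) : G.Adj a' a').ne rfl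
  -- intersections with {v}ᶜ
  have hvNa' : v ∉ G.neighborSet a' := fun h => ha'Nv (Adj.symm h)
  have hNa'int : G.neighborSet a' ∩ ({v}ᶜ : Set V) = G.neighborSet a' :=
    Set.inter_eq_self_of_subset_left (by
      intro z hz
      simp only [Set.mem_compl_iff, Set.mem_singleton_iff]
      rintro rfl
      exact hvNa' hz)
  have hvNw : v ∉ G.neighborSet w := by
    intro h
    exact hwNv (Adj.symm h)
  have hNwint : G.neighborSet w ∩ ({v}ᶜ : Set V) = G.neighborSet w :=
    Set.inter_eq_self_of_subset_left (by
      intro z hz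
      simp only [Set.mem_compl_iff, Set.mem_singleton_iff]
      rintro rfl
      exact hvNw hz)
  have hNaint : G.neighborSet a ∩ ({v}ᶜ : Set V) = {b, a'} := by
    rw [Na]
    exact triple_inter v b a' _ (by simp) (by simp [hbv]) (by simp [ha'v])
  refine ⟨w, a', a, b,
    ⟨by simp [hwv], by simp [ha'v], by simp [hav], by simp [hbv],
     hwmem.symm, hGaa'.symm, hab, hwb,
     by rw [hNwint]; exact hw3,
     by rw [hNa'int]; exact hda'2,
     by rw [hNaint]; exact Set.ncard_pair hba'⟩, ?_⟩
  have hvs : v ∉ ({v, w, a', a, b}ᶜ : Set V) := by simp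
  have hcs : c ∈ ({v, w, a', a, b}ᶜ : Set V) := by
    simp only [Set.mem_compl_iff, Set.mem_insert_iff, Set.mem_singleton_iff]
    push_neg
    exact ⟨hcv, fun h => hwc h.symm, hca', hca, hcb⟩
  have hds : d ∈ ({v, w, a', a, b}ᶜ : Set V) := by
    simp only [Set.mem_compl_iff, Set.mem_insert_iff, Set.mem_singleton_iff]
    push_neg
    exact ⟨hdv, fun h => hwd h.symm, hda', hda, hdb⟩
  have hc's : c' ∈ ({v, w, a', a, b}ᶜ : Set V) := by
    simp only [Set.mem_compl_iff, Set.mem_insert_iff, Set.mem_singleton_iff]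
    push_neg
    exact ⟨hc'v, fun h => hwc' h.symm, hd2.symm, hc'a, hc'b⟩
  have hd's : d' ∈ ({v, w, a', a, b}ᶜ : Set V) := by
    simp only [Set.mem_compl_iff, Set.mem_insert_iff, Set.mem_singleton_iff]
    push_neg
    exact ⟨hd'v, fun h => hwd' h.symm, hd3.symm, hd'a, hd'b⟩
  have hNcint : G.neighborSet c ∩ ({v, w, a', a, b}ᶜ : Set V) = {d, c'} := by
    rw [Nc]
    exact triple_inter v d c' _ hvs hds hc's
  have hNdint : G.neighborSet d ∩ ({v, w, a', a, b}ᶜ : Set V) = {c, d'} := by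
    rw [Nd]
    exact triple_inter v c d' _ hvs hcs hd's
  exact dichotomy_set G ({v, w, a', a, b}ᶜ : Set V) c d c' d' hcs hds hc's hd's hcd
    hNcint hNdint hdc' hcd2 hd6

end Helpers

end ChainAux


/-- Lemma 1 (chain cases). -/
theorem lemma_chain_cases {V : Type*} [Fintype V] (G : SimpleGraph V)
    (hmin : ∀ w : V, 2 ≤ (G.neighborSet w).ncard)
    (hdeg2 : ∀ w : V, (G.neighborSet w).ncard = 2 →
      (∀ a ∈ G.neighborSet w, 3 ≤ (G.neighborSet a).ncard) ∧
      (∀ a b : V, a ∈ G.neighborSet w → b ∈ G.neighborSet w → a ≠ b → ¬ G.Adj a b))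
    (v u1 u2 u3 u4 u1' u2' u3' u4' : V)
    (hdv : (G.neighborSet v).ncard = 4)
    (hNv : G.neighborSet v = {u1, u2, u3, u4})
    (h12 : G.Adj u1 u2) (h34 : G.Adj u3 u4)
    (h13 : ¬ G.Adj u1 u3) (h14 : ¬ G.Adj u1 u4)
    (h23 : ¬ G.Adj u2 u3) (h24 : ¬ G.Adj u2 u4)
    (hout1 : G.neighborSet u1 \ insert v (G.neighborSet v) = {u1'})
    (hout2 : G.neighborSet u2 \ insert v (G.neighborSet v) = {u2'})
    (hout3 : G.neighborSet u3 \ insert v (G.neighborSet v) = {u3'})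
    (hout4 : G.neighborSet u4 \ insert v (G.neighborSet v) = {u4'})
    (hdist : List.Pairwise (· ≠ ·) [u1', u2', u3', u4']) :
    ∃ x x1 x2 x3 : V, ChainInInduced G ({v}ᶜ : Set V) x x1 x2 x3 ∧
      ((∃ c : (G.induce ({v, x, x1, x2, x3}ᶜ : Set V)).ConnectedComponent,
          4 ≤ c.supp.ncard ∧
          ((∃ n : ℕ, Nonempty
              ((G.induce ({v, x, x1, x2, x3}ᶜ : Set V)).induce c.supp ≃g
                SimpleGraph.pathGraph n)) ∨
           (∃ n : ℕ, Nonempty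
              ((G.induce ({v, x, x1, x2, x3}ᶜ : Set V)).induce c.supp ≃g
                SimpleGraph.cycleGraph n)))) ∨
       (∃ y y1 y2 y3 : V,
          ChainInInduced G ({v, x, x1, x2, x3}ᶜ : Set V) y y1 y2 y3)) := by
  classical
  simp only [List.pairwise_cons, List.mem_cons, List.not_mem_nil, List.mem_singleton] at hdist
  have d12 : u1' ≠ u2' := hdist.1 u2' (Or.inl rfl)
  have d13 : u1' ≠ u3' := hdist.1 u3' (Or.inr (Or.inl rfl))
  have d14 : u1' ≠ u4' := hdist.1 u4' (Or.inr (Or.inr (Or.inl rfl)))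
  have d23 : u2' ≠ u3' := hdist.2.1 u3' (Or.inl rfl)
  have d24 : u2' ≠ u4' := hdist.2.1 u4' (Or.inr (Or.inl rfl))
  have d34 : u3' ≠ u4' := hdist.2.2.1 u4' (Or.inl rfl)
  have hNvB : G.neighborSet v = {u2, u1, u3, u4} := by
    rw [hNv]; ext z; simp only [Set.mem_insert_iff, Set.mem_singleton_iff]; tauto
  have hNvC : G.neighborSet v = {u3, u4, u1, u2} := by
    rw [hNv]; ext z; simp only [Set.mem_insert_iff, Set.mem_singleton_iff]; tauto
  have hNvD : G.neighborSet v = {u4, u3, u1, u2} := by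
    rw [hNv]; ext z; simp only [Set.mem_insert_iff, Set.mem_singleton_iff]; tauto
  by_cases h1 : 3 ≤ (G.neighborSet u1').ncard
  · exact ChainAux.helperA G v u1 u2 u3 u4 u1' u2' u3' u4' hNv h12 h34 h13 h14 h23 h24
      hout1 hout2 hout3 hout4 d12 d13 d14 d23 d24 d34 h1
  by_cases h2 : 3 ≤ (G.neighborSet u2').ncard
  · exact ChainAux.helperA G v u2 u1 u3 u4 u2' u1' u3' u4' hNvB h12.symm h34 h23 h24 h13 h14
      hout2 hout1 hout3 hout4 d12.symm d23 d24 d13 d14 d34 h2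
  by_cases h3 : 3 ≤ (G.neighborSet u3').ncard
  · exact ChainAux.helperA G v u3 u4 u1 u2 u3' u4' u1' u2' hNvC h34 h12
      (fun h => h13 h.symm) (fun h => h23 h.symm) (fun h => h14 h.symm) (fun h => h24 h.symm)
      hout3 hout4 hout1 hout2 d34 d13.symm d23.symm d14.symm d24.symm d12 h3
  by_cases h4 : 3 ≤ (G.neighborSet u4').ncard
  · exact ChainAux.helperA G v u4 u3 u1 u2 u4' u3' u1' u2' hNvD h34.symm h12
      (fun h => h14 h.symm) (fun h => h24 h.symm) (fun h => h13 h.symm) (fun h => h23 h.symm)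
      hout4 hout3 hout1 hout2 d34.symm d14.symm d24.symm d13.symm d23.symm d12 h4
  · have e1 : (G.neighborSet u1').ncard = 2 := by have := hmin u1'; omega
    have e3 : (G.neighborSet u3').ncard = 2 := by have := hmin u3'; omega
    have e4 : (G.neighborSet u4').ncard = 2 := by have := hmin u4'; omega
    exact ChainAux.helperB G v u1 u2 u3 u4 u1' u2' u3' u4' hdeg2 hNv h12 h34 h13 h14 h23 h24
      hout1 hout2 hout3 hout4 d12 d13 d14 d23 d24 d34 e1 e3 e4
end

section
/- Let G be a finite simple graph with no dominating vertex (i.e., no vertex dominates another). Let v be a vertex of degree 4 with N(v) = {u₁, u₂, u₃, u₄}, such that the only edges among u₁, u₂, u₃, u₄ are u₁u₂ and u₃u₄, each uᵢ has exactly one neighbor u′ᵢ outside N[v], and u′₁, u′₂, u′₃, u′₄ are pairwise distinct. Then the graph G − v has no dominating vertex. -/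
/-- In a graph `H`, vertex `v` dominates vertex `u` if they are adjacent
and `N(u) ⊆ N[v]`. -/
def GDominates {V : Type*} (H : SimpleGraph V) (v u : V) : Prop :=
  H.Adj u v ∧ H.neighborSet u ⊆ insert v (H.neighborSet v)

/-- Lemma 2: under the setup of the sub-steps of (S5), `G − v` has no
dominating vertex. -/
theorem lemma_G_minus_v_no_dominating {V : Type*} [Fintype V] (G : SimpleGraph V)
    (hnodom : ∀ a b : V, ¬ GDominates G a b)
    (v u1 u2 u3 u4 u1' u2' u3' u4' : V)
    (hdv : (G.neighborSet v).ncard = 4)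
    (hNv : G.neighborSet v = {u1, u2, u3, u4})
    (h12 : G.Adj u1 u2) (h34 : G.Adj u3 u4)
    (h13 : ¬ G.Adj u1 u3) (h14 : ¬ G.Adj u1 u4)
    (h23 : ¬ G.Adj u2 u3) (h24 : ¬ G.Adj u2 u4)
    (hout1 : G.neighborSet u1 \ insert v (G.neighborSet v) = {u1'})
    (hout2 : G.neighborSet u2 \ insert v (G.neighborSet v) = {u2'})
    (hout3 : G.neighborSet u3 \ insert v (G.neighborSet v) = {u3'})
    (hout4 : G.neighborSet u4 \ insert v (G.neighborSet v) = {u4'})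
    (hdist : List.Pairwise (· ≠ ·) [u1', u2', u3', u4']) :
    ∀ a b : ({v}ᶜ : Set V), ¬ GDominates (G.induce ({v}ᶜ : Set V)) a b := by
  rintro a b ⟨hab, hsub⟩
  have hd12 : u1' ≠ u2' := by simp at hdist; tauto
  have hd34 : u3' ≠ u4' := by simp at hdist; tauto
  have hA : (a : V) ≠ v := by
    have := a.2
    simp only [Set.mem_compl_iff, Set.mem_singleton_iff] at this
    exact this
  have hadjBA : G.Adj (b : V) (a : V) := by
    simpa using hab
  -- Since `a` does not dominate `b` in `G`, get a witness neighbor of `b`.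
  have hnsub : ¬ G.neighborSet (b : V) ⊆ insert (a : V) (G.neighborSet (a : V)) := by
    intro h
    exact hnodom (a : V) (b : V) ⟨hadjBA, h⟩
  obtain ⟨w, hwB, hwA⟩ := Set.not_subset.mp hnsub
  have hwv : w = v := by
    by_contra hwv
    have hwmem : (⟨w, by simpa using hwv⟩ : ({v}ᶜ : Set V)) ∈
        (G.induce ({v}ᶜ : Set V)).neighborSet b := by
      simpa using hwB
    have := hsub hwmem
    rcases this with h | h
    · exact hwA (Set.mem_insert_iff.mpr (Or.inl (congrArg Subtype.val h)))
    · exact hwA (Set.mem_insert_iff.mpr (Or.inr (by simpa using h)))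
  rw [hwv] at hwB hwA
  have hBNv : (b : V) ∈ G.neighborSet v := by
    simpa [SimpleGraph.adj_comm] using hwB
  have hAnot : (a : V) ∉ insert v (G.neighborSet v) := by
    intro h
    rcases Set.mem_insert_iff.mp h with h | h
    · exact hA h
    · exact hwA (Set.mem_insert_iff.mpr (Or.inr (by simpa [SimpleGraph.adj_comm] using h)))
  -- general argument
  have main : ∀ x y x' y' : V, G.Adj x y → y ∈ G.neighborSet v →
      G.neighborSet x \ insert v (G.neighborSet v) = {x'} →
      G.neighborSet y \ insert v (G.neighborSet v) = {y'} →
      x' ≠ y' → (b : V) = x → False := by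
    intro x y x' y' hxy hyv hox hoy hne hbx
    have hax' : (a : V) = x' := by
      have : (a : V) ∈ G.neighborSet x \ insert v (G.neighborSet v) := by
        refine ⟨?_, hAnot⟩
        rw [← hbx]; exact hadjBA
      rw [hox] at this
      simpa using this
    have hyv' : y ≠ v := fun h => G.irrefl (h ▸ hyv)
    have hy : y ∈ ({v}ᶜ : Set V) := by simpa using hyv'
    have hymem : (⟨y, hy⟩ : ({v}ᶜ : Set V)) ∈
        (G.induce ({v}ᶜ : Set V)).neighborSet b := by
      simp only [SimpleGraph.mem_neighborSet]
      simpa using (hbx ▸ hxy : G.Adj (b : V) y)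
    rcases hsub hymem with h | h
    · -- y = a = x', impossible since x' ∉ N[v] but y ∈ N(v)
      have : y = x' := by rw [← hax']; exact (Subtype.ext_iff.mp h).symm ▸ rfl
      have hx'mem : x' ∈ G.neighborSet x \ insert v (G.neighborSet v) := by
        rw [hox]; rfl
      exact hx'mem.2 (this ▸ Set.mem_insert_iff.mpr (Or.inr hyv))
    · -- G.Adj x' y, so x' ∈ N(y) \ N[v] = {y'}, contradiction
      have hadj : G.Adj x' y := by
        rw [← hax']; simpa using h
      have hx'mem : x' ∈ G.neighborSet x \ insert v (G.neighborSet v) := by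
        rw [hox]; rfl
      have : x' ∈ G.neighborSet y \ insert v (G.neighborSet v) :=
        ⟨hadj.symm, hx'mem.2⟩
      rw [hoy] at this
      exact hne (by simpa using this)
  have h1v : u1 ∈ G.neighborSet v := by rw [hNv]; simp
  have h2v : u2 ∈ G.neighborSet v := by rw [hNv]; simp
  have h3v : u3 ∈ G.neighborSet v := by rw [hNv]; simp
  have h4v : u4 ∈ G.neighborSet v := by rw [hNv]; simp
  rw [hNv] at hBNv
  rcases hBNv with h | h | h | h
  · exact main u1 u2 u1' u2' h12 h2v hout1 hout2 hd12 h
  · exact main u2 u1 u2' u1' h12.symm h1v hout2 hout1 hd12.symm h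
  · exact main u3 u4 u3' u4' h34 h4v hout3 hout4 hd34 h
  · exact main u4 u3 u4' u3' h34.symm h3v hout4 hout3 hd34.symm h
end

section
/- Let G be a finite simple graph and let X be a set of vertices such that the induced subgraph G[X] contains no path on 3 vertices. If C is a 3-path vertex cover of the graph G − N[X], then C ∪ N(X) is a 3-path vertex cover of G. -/
/-- `S` is a 3-path vertex cover of `H`: every path on 3 vertices contains a
vertex of `S`. -/
def IsPVC3 {V : Type*} (H : SimpleGraph V) (S : Set V) : Prop :=
  ∀ a b c : V, H.Adj a b → H.Adj b c → a ≠ c → a ∈ S ∨ b ∈ S ∨ c ∈ S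

/-- If the induced subgraph `G[X]` contains no path on 3 vertices and `C` is a
3-path vertex cover of `G − N[X]`, then `C ∪ N(X)` is a 3-path vertex cover
of `G`. -/
theorem pvc3_extend {V : Type*} [Fintype V] (G : SimpleGraph V) (X : Set V)
    (hX : ∀ a b c : V, a ∈ X → b ∈ X → c ∈ X →
      G.Adj a b → G.Adj b c → a = c)
    (C : Set ((⋃ v ∈ X, insert v (G.neighborSet v) : Set V)ᶜ : Set V))
    (hC : IsPVC3 (G.induce ((⋃ v ∈ X, insert v (G.neighborSet v) : Set V)ᶜ : Set V)) C) :
    IsPVC3 G ((Subtype.val '' C) ∪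
      ((⋃ v ∈ X, insert v (G.neighborSet v) : Set V) \ X)) := by
  intro a b c hab hbc hac
  set M : Set V := ⋃ v ∈ X, insert v (G.neighborSet v) with hM
  have hmem : ∀ x : V, x ∈ M ↔ ∃ v ∈ X, x = v ∨ G.Adj v x := by
    intro x
    simp [hM, Set.mem_iUnion₂, Set.mem_insert_iff, SimpleGraph.mem_neighborSet]
  have hXM : ∀ x : V, x ∈ X → x ∈ M := fun x hx => (hmem x).2 ⟨x, hx, Or.inl rfl⟩
  have hNM : ∀ x y : V, x ∈ X → G.Adj x y → y ∈ M :=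
    fun x y hx hxy => (hmem y).2 ⟨x, hx, Or.inr hxy⟩
  by_cases hbM : b ∈ M
  · by_cases hbX : b ∈ X
    · -- a, c ∈ N(b) ⊆ M; not both in X
      by_cases haX : a ∈ X
      · by_cases hcX : c ∈ X
        · exact absurd (hX a b c haX hbX hcX hab hbc) hac
        · exact Or.inr (Or.inr (Or.inr ⟨hNM b c hbX hbc, hcX⟩))
      · exact Or.inl (Or.inr ⟨hNM b a hbX hab.symm, haX⟩)
    · exact Or.inr (Or.inl (Or.inr ⟨hbM, hbX⟩))
  · have haX : a ∉ X := fun h => hbM (hNM a b h hab)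
    have hcX : c ∉ X := fun h => hbM (hNM c b h hbc.symm)
    by_cases haM : a ∈ M
    · exact Or.inl (Or.inr ⟨haM, haX⟩)
    · by_cases hcM : c ∈ M
      · exact Or.inr (Or.inr (Or.inr ⟨hcM, hcX⟩))
      · have := hC ⟨a, haM⟩ ⟨b, hbM⟩ ⟨c, hcM⟩ hab hbc
          (by simp [Subtype.ext_iff]; exact hac)
        rcases this with h | h | h
        · exact Or.inl (Or.inl ⟨_, h, rfl⟩)
        · exact Or.inr (Or.inl (Or.inl ⟨_, h, rfl⟩))
        · exact Or.inr (Or.inr (Or.inl ⟨_, h, rfl⟩))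
end

section
/- Let G be a finite simple graph containing four distinct vertices a, b, c, d that induce a chordless 4-cycle with edges ab, bc, cd, da (and no other edges among them), such that N(a) = {b, d} and N(c) = {b, d} (so a and c have no neighbors outside the cycle). Then there exists a minimum-size 3-path vertex cover S of G with b ∈ S, d ∈ S, a ∉ S, and c ∉ S. -/
/-- If `a, b, c, d` induce a chordless 4-cycle with edges `ab, bc, cd, da` and
`a, c` have no neighbors outside the cycle (`N(a) = N(c) = {b, d}`), then some
minimum 3-path vertex cover contains `b, d` and avoids `a, c`. -/
theorem cycle4_min_pvc3 {V : Type*} [Fintype V] (G : SimpleGraph V)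
    (a b c d : V)
    (hab : a ≠ b) (hac : a ≠ c) (had : a ≠ d)
    (hbc : b ≠ c) (hbd : b ≠ d) (hcd : c ≠ d)
    (eab : G.Adj a b) (ebc : G.Adj b c) (ecd : G.Adj c d) (eda : G.Adj d a)
    (nac : ¬ G.Adj a c) (nbd : ¬ G.Adj b d)
    (hNa : G.neighborSet a = {b, d})
    (hNc : G.neighborSet c = {b, d}) :
    ∃ S : Set V, IsPVC3 G S ∧ (∀ T : Set V, IsPVC3 G T → S.ncard ≤ T.ncard) ∧
      b ∈ S ∧ d ∈ S ∧ a ∉ S ∧ c ∉ S := by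
  classical
  have hex : ∃ n, ∃ T : Set V, IsPVC3 G T ∧ T.ncard = n :=
    ⟨(Set.univ : Set V).ncard, Set.univ, fun _ _ _ _ _ _ => Or.inl trivial, rfl⟩
  obtain ⟨T, hT, hTn⟩ := Nat.sInf_mem hex
  have hmin : ∀ U : Set V, IsPVC3 G U → T.ncard ≤ U.ncard := by
    intro U hU
    rw [hTn]
    exact Nat.sInf_le ⟨U, hU, rfl⟩
  set X : Set V := {a, b, c, d} with hX
  set S : Set V := (T \ X) ∪ {b, d} with hS
  have hbS : b ∈ S := Or.inr (Or.inl rfl)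
  have hdS : d ∈ S := Or.inr (Or.inr rfl)
  have haS : a ∉ S := by
    rintro (h | h | h)
    · exact h.2 (Or.inl rfl)
    · exact hab h
    · exact had h
  have hcS : c ∉ S := by
    rintro (h | h | h)
    · exact h.2 (Or.inr (Or.inr (Or.inl rfl)))
    · exact hbc h.symm
    · exact hcd h
  have hadjS : ∀ w, G.Adj a w → w ∈ S := by
    intro w hw
    have : w ∈ G.neighborSet a := hw
    rw [hNa] at this
    rcases this with rfl | rfl
    · exact hbS
    · exact hdS
  have hcadjS : ∀ w, G.Adj c w → w ∈ S := by
    intro w hw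
    have : w ∈ G.neighborSet c := hw
    rw [hNc] at this
    rcases this with rfl | rfl
    · exact hbS
    · exact hdS
  have hSP : IsPVC3 G S := by
    intro x y z hxy hyz hxz
    by_contra h
    push_neg at h
    obtain ⟨hx, hy, hz⟩ := h
    have hxX : x ∉ X := by
      rintro (rfl | rfl | rfl | rfl)
      · exact hy (hadjS y hxy)
      · exact hx hbS
      · exact hy (hcadjS y hxy)
      · exact hx hdS
    have hyX : y ∉ X := by
      rintro (rfl | rfl | rfl | rfl)
      · exact hx (hadjS x hxy.symm)
      · exact hy hbS
      · exact hx (hcadjS x hxy.symm)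
      · exact hy hdS
    have hzX : z ∉ X := by
      rintro (rfl | rfl | rfl | rfl)
      · exact hy (hadjS y hyz.symm)
      · exact hz hbS
      · exact hy (hcadjS y hyz.symm)
      · exact hz hdS
    rcases hT x y z hxy hyz hxz with h | h | h
    · exact hx (Or.inl ⟨h, hxX⟩)
    · exact hy (Or.inl ⟨h, hyX⟩)
    · exact hz (Or.inl ⟨h, hzX⟩)
  have haX : a ∈ X := Or.inl rfl
  have hbX : b ∈ X := Or.inr (Or.inl rfl)
  have hcX : c ∈ X := Or.inr (Or.inr (Or.inl rfl))
  have hdX : d ∈ X := Or.inr (Or.inr (Or.inr rfl))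
  have htwo : ∃ u v, u ∈ T ∩ X ∧ v ∈ T ∩ X ∧ u ≠ v := by
    by_cases haT : a ∈ T
    · rcases hT b c d ebc ecd hbd with h | h | h
      · exact ⟨a, b, ⟨haT, haX⟩, ⟨h, hbX⟩, hab⟩
      · exact ⟨a, c, ⟨haT, haX⟩, ⟨h, hcX⟩, hac⟩
      · exact ⟨a, d, ⟨haT, haX⟩, ⟨h, hdX⟩, had⟩
    · by_cases hcT : c ∈ T
      · rcases hT b a d eab.symm eda.symm hbd with h | h | h
        · exact ⟨c, b, ⟨hcT, hcX⟩, ⟨h, hbX⟩, hbc.symm⟩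
        · exact absurd h haT
        · exact ⟨c, d, ⟨hcT, hcX⟩, ⟨h, hdX⟩, hcd⟩
      · rcases hT a b c eab ebc hac with h | h | h
        · exact absurd h haT
        · rcases hT a d c eda.symm ecd.symm hac with h' | h' | h'
          · exact absurd h' haT
          · exact ⟨b, d, ⟨h, hbX⟩, ⟨h', hdX⟩, hbd⟩
          · exact absurd h' hcT
        · exact absurd h hcT
  obtain ⟨u, v, hu, hv, huv⟩ := htwo
  have h2 : 2 ≤ (T ∩ X).ncard := by
    have hsub : ({u, v} : Set V) ⊆ T ∩ X := by
      rintro w (rfl | rfl)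
      · exact hu
      · exact hv
    have := Set.ncard_le_ncard hsub (Set.toFinite _)
    rwa [Set.ncard_pair huv] at this
  have hSc : S.ncard ≤ T.ncard := by
    have h1 : S.ncard ≤ (T \ X).ncard + ({b, d} : Set V).ncard :=
      Set.ncard_union_le _ _
    rw [Set.ncard_pair hbd] at h1
    have h4 : (T ∩ X).ncard + (T \ X).ncard = T.ncard :=
      Set.ncard_inter_add_ncard_diff_eq_ncard T X (Set.toFinite T)
    omega
  exact ⟨S, hSP, fun U hU => le_trans hSc (hmin U hU), hbS, hdS, haS, hcS⟩
end

section
/- Let G be a finite simple graph and suppose a vertex v dominates a vertex u. Then there exists a minimum-size 3-path vertex cover S of G such that either v ∈ S, or (N(v) ∖ {u} ⊆ S and u ∉ S and v ∉ S). -/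
/-- Correctness of rule (B2): if `v` dominates `u`, then there is a minimum
3-path vertex cover `S` such that `v ∈ S`, or `N(v) \ {u} ⊆ S`, `u ∉ S` and
`v ∉ S`. -/
theorem rule_B2_correct {V : Type*} [Fintype V] (G : SimpleGraph V) (v u : V)
    (hdom : G.Adj u v ∧ G.neighborSet u ⊆ insert v (G.neighborSet v)) :
    ∃ S : Set V, IsPVC3 G S ∧ (∀ T : Set V, IsPVC3 G T → S.ncard ≤ T.ncard) ∧
      (v ∈ S ∨ (G.neighborSet v \ {u} ⊆ S ∧ u ∉ S ∧ v ∉ S)) := by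
  obtain ⟨huv, hsub⟩ := hdom
  obtain ⟨T, hT, hTmin⟩ := Set.exists_min_image {T : Set V | IsPVC3 G T} Set.ncard
    (Set.toFinite _) ⟨Set.univ, fun a _ _ _ _ _ => Or.inl (Set.mem_univ a)⟩
  simp only [Set.mem_setOf_eq] at hT hTmin
  by_cases hv : v ∈ T
  · exact ⟨T, hT, fun T' h' => hTmin T' h', Or.inl hv⟩
  by_cases hu : u ∈ T
  · -- swap u for v
    have hadjv : ∀ w, G.Adj u w → w ≠ v → G.Adj v w := by
      intro w hw hwv
      rcases hsub hw with h | h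
      · exact absurd h hwv
      · exact h
    refine ⟨insert v (T \ {u}), ?_, ?_, Or.inl (Set.mem_insert _ _)⟩
    · intro a b c hab hbc hac
      by_contra hcon
      push_neg at hcon
      obtain ⟨ha, hb, hc⟩ := hcon
      have hav : a ≠ v := fun h => ha (h ▸ Set.mem_insert _ _)
      have hbv : b ≠ v := fun h => hb (h ▸ Set.mem_insert _ _)
      have hcv : c ≠ v := fun h => hc (h ▸ Set.mem_insert _ _)
      have hmem : ∀ x, x ∉ insert v (T \ {u}) → x ≠ u → x ∉ T := by
        intro x hx hxu hxT
        exact hx (Set.mem_insert_of_mem _ ⟨hxT, hxu⟩)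
      rcases hT a b c hab hbc hac with h | h | h
      · -- a ∈ T, so a = u
        have hau : a = u := by
          by_contra h'; exact hmem a ha h' h
        have hvb : G.Adj v b := hadjv b (hau ▸ hab) hbv
        have hbu : b ≠ u := fun h' => hab.ne (hau.trans h'.symm)
        have hcu : c ≠ u := fun h' => hac (hau.trans h'.symm)
        rcases hT v b c hvb hbc (fun h' => hcv h'.symm) with h' | h' | h'
        · exact hv h'
        · exact hmem b hb hbu h'
        · exact hmem c hc hcu h'
      · -- b ∈ T, so b = u
        have hbu : b = u := by
          by_contra h'; exact hmem b hb h' h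
        have hva : G.Adj v a := hadjv a (hbu ▸ hab).symm hav
        have hvc : G.Adj v c := hadjv c (hbu ▸ hbc) hcv
        have hau : a ≠ u := fun h' => hab.ne (h'.trans hbu.symm)
        have hcu : c ≠ u := fun h' => hbc.ne (hbu.trans h'.symm)
        rcases hT a v c hva.symm hvc hac with h' | h' | h'
        · exact hmem a ha hau h'
        · exact hv h'
        · exact hmem c hc hcu h'
      · -- c ∈ T, so c = u
        have hcu : c = u := by
          by_contra h'; exact hmem c hc h' h
        have hvb : G.Adj v b := hadjv b (hcu ▸ hbc).symm hbv
        have hbu : b ≠ u := fun h' => hbc.ne (h'.trans hcu.symm)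
        have hau : a ≠ u := fun h' => hac (h'.trans hcu.symm)
        rcases hT a b v hab hvb.symm (fun h' => hav h') with h' | h' | h'
        · exact hmem a ha hau h'
        · exact hmem b hb hbu h'
        · exact hv h'
    · intro T' hT'
      have h1 : (insert v (T \ {u})).ncard ≤ (T \ {u}).ncard + 1 :=
        Set.ncard_insert_le _ _
      have h2 : (T \ {u}).ncard + 1 = T.ncard :=
        Set.ncard_diff_singleton_add_one hu (Set.toFinite T)
      calc (insert v (T \ {u})).ncard ≤ T.ncard := by omega
        _ ≤ T'.ncard := hTmin T' hT'
  · refine ⟨T, hT, fun T' h' => hTmin T' h', Or.inr ⟨?_, hu, hv⟩⟩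
    intro w hw
    obtain ⟨hwN, hwu⟩ := hw
    rcases hT u v w huv hwN (fun h => hwu h.symm) with h | h | h
    · exact absurd h hu
    · exact absurd h hv
    · exact h
end

section
/- Let G be a finite simple graph and suppose a vertex v weakly dominates some vertex. Then there exists a minimum-size 3-path vertex cover S of G such that either v ∈ S, or there exists u ∈ N(v) with N({u,v}) ⊆ S, u ∉ S, and v ∉ S. -/
/-- Correctness of rule (B3): if `v` weakly dominates some vertex, then there is
a minimum 3-path vertex cover `S` such that `v ∈ S`, or there is `u ∈ N(v)` with
`N({u,v}) ⊆ S`, `u ∉ S` and `v ∉ S`, where `N({u,v}) = (N[u] ∪ N[v]) \ {u,v}`. -/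
theorem rule_B3_correct {V : Type*} [Fintype V] (G : SimpleGraph V) (v : V)
    (hwd : ∃ u : V, G.Adj u v ∧ ∃ x ∈ G.neighborSet u,
      x ∉ insert v (G.neighborSet v) ∧
      G.neighborSet u \ {x} ⊆ insert v (G.neighborSet v)) :
    ∃ S : Set V, IsPVC3 G S ∧ (∀ T : Set V, IsPVC3 G T → S.ncard ≤ T.ncard) ∧
      (v ∈ S ∨ ∃ u ∈ G.neighborSet v,
        ((insert u (G.neighborSet u) ∪ insert v (G.neighborSet v)) \ {u, v} : Set V) ⊆ S ∧
        u ∉ S ∧ v ∉ S) := by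
  classical
  obtain ⟨u₀, hadj, x, hxu, hxnv, hsub⟩ := hwd
  -- x is a neighbor of u₀
  have hxadj : G.Adj u₀ x := hxu
  have hxv : x ≠ v := fun h => hxnv (by simp [h])
  have hkey : ∀ y, G.Adj u₀ y → y ≠ x → y = v ∨ G.Adj v y := by
    intro y hy hyx
    have : y ∈ insert v (G.neighborSet v) := hsub ⟨hy, hyx⟩
    simpa using this
  -- take a minimum PVC3 T
  obtain ⟨T, hT, hTcard⟩ :=
    Nat.sInf_mem (s := {n | ∃ S : Set V, IsPVC3 G S ∧ S.ncard = n})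
      ⟨(Set.univ : Set V).ncard, Set.univ, fun a _ _ _ _ _ => Or.inl trivial, rfl⟩
  have hmin : ∀ T' : Set V, IsPVC3 G T' → T.ncard ≤ T'.ncard := by
    intro T' h
    rw [hTcard]
    exact Nat.sInf_le ⟨T', h, rfl⟩
  by_cases hvT : v ∈ T
  · exact ⟨T, hT, hmin, Or.inl hvT⟩
  by_cases hw : ∃ w ∈ G.neighborSet v, w ∉ T
  · obtain ⟨w, hwv, hwT⟩ := hw
    refine ⟨T, hT, hmin, Or.inr ⟨w, hwv, ?_, hwT, hvT⟩⟩
    rintro y ⟨hy, hy2⟩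
    simp only [Set.mem_insert_iff, Set.mem_singleton_iff, not_or] at hy2
    obtain ⟨hyw, hyv⟩ := hy2
    simp only [Set.mem_union, Set.mem_insert_iff, SimpleGraph.mem_neighborSet] at hy
    by_contra hyT
    rcases hy with (h | h) | (h | h)
    · exact hyw h
    · rcases hT v w y hwv h (Ne.symm hyv) with h' | h' | h'
      · exact hvT h'
      · exact hwT h'
      · exact hyT h'
    · exact hyv h
    · rcases hT w v y hwv.symm h (Ne.symm hyw) with h' | h' | h'
      · exact hwT h'
      · exact hvT h'
      · exact hyT h'
  · -- all neighbors of v are in T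
    push_neg at hw
    have hall : ∀ y, G.Adj v y → y ∈ T := fun y hy => hw y hy
    have huT : u₀ ∈ T := hall u₀ hadj.symm
    have hu₀x : u₀ ≠ x := hxadj.ne
    set S : Set V := insert x (T \ {u₀}) with hS
    have hnotS : ∀ y, y ∉ S → y ≠ x ∧ (y ∈ T → y = u₀) := by
      intro y hy
      constructor
      · intro h; exact hy (by simp [hS, h])
      · intro hyT
        by_contra h
        exact hy (by simp [hS, hyT, h])
    have hSpvc : IsPVC3 G S := by
      intro a b c hab hbc hac
      by_contra hcon
      push_neg at hcon
      obtain ⟨haS, hbS, hcS⟩ := hcon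
      obtain ⟨hax, haT⟩ := hnotS a haS
      obtain ⟨hbx, hbT⟩ := hnotS b hbS
      obtain ⟨hcx, hcT⟩ := hnotS c hcS
      rcases hT a b c hab hbc hac with h | h | h
      · -- a = u₀
        have ha : a = u₀ := haT h
        have hb : b = v := by
          rcases hkey b (ha ▸ hab) hbx with h' | h'
          · exact h'
          · exact absurd (ha ▸ hbT (hall b h')) hab.ne'
        have : c = u₀ := hcT (hall c (hb ▸ hbc))
        exact hac (ha.trans this.symm)
      · -- b = u₀
        have hb : b = u₀ := hbT h
        have ha : a = v := by
          rcases hkey a (hb ▸ hab.symm) hax with h' | h'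
          · exact h'
          · exact absurd (hb ▸ haT (hall a h')) hab.ne
        have hc : c = v := by
          rcases hkey c (hb ▸ hbc) hcx with h' | h'
          · exact h'
          · exact absurd (hb ▸ hcT (hall c h')) hbc.ne'
        exact hac (ha.trans hc.symm)
      · -- c = u₀
        have hc : c = u₀ := hcT h
        have hb : b = v := by
          rcases hkey b (hc ▸ hbc.symm) hbx with h' | h'
          · exact h'
          · exact absurd (hc ▸ hbT (hall b h')) hbc.ne
        have : a = u₀ := haT (hall a (hb ▸ hab.symm))
        exact hac (this.trans hc.symm)
    have hScard : S.ncard ≤ T.ncard := by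
      calc S.ncard ≤ (T \ {u₀}).ncard + 1 := Set.ncard_insert_le _ _
        _ = T.ncard := Set.ncard_diff_singleton_add_one huT
    refine ⟨S, hSpvc, fun T' h => le_trans hScard (hmin T' h), Or.inr ⟨u₀, hadj.symm, ?_, ?_, ?_⟩⟩
    · rintro y ⟨hy, hy2⟩
      simp only [Set.mem_insert_iff, Set.mem_singleton_iff, not_or] at hy2
      obtain ⟨hyu, hyv⟩ := hy2
      simp only [Set.mem_union, Set.mem_insert_iff, SimpleGraph.mem_neighborSet] at hy
      rcases hy with (h | h) | (h | h)
      · exact absurd h hyu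
      · by_cases hyx : y = x
        · simp [hS, hyx]
        · rcases hkey y h hyx with h' | h'
          · exact absurd h' hyv
          · have : y ∈ T := hall y h'
            simp [hS, this, hyu]
      · exact absurd h hyv
      · have : y ∈ T := hall y h
        simp [hS, this, hyu]
    · simp [hS, hu₀x]
    · simp [hS, hxv.symm, hvT]
end

section
/- Let G be a finite simple graph, let v be a vertex with deg(v) = 1, let u be the unique neighbor of v, and suppose deg(u) = 2 with w the neighbor of u other than v. Then there exists a minimum-size 3-path vertex cover S of G with w ∈ S, u ∉ S, and v ∉ S. -/
/-- Correctness of rule (S2): if `deg v = 1` with unique neighbor `u`, and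
`deg u = 2` with `w` the neighbor of `u` other than `v`, then there is a minimum
3-path vertex cover `S` with `w ∈ S`, `u ∉ S` and `v ∉ S`. -/
theorem rule_S2_correct {V : Type*} [Fintype V] (G : SimpleGraph V) (v u w : V)
    (hdv : (G.neighborSet v).ncard = 1)
    (hNv : G.neighborSet v = {u})
    (hdu : (G.neighborSet u).ncard = 2)
    (hNu : G.neighborSet u = {v, w})
    (hwv : w ≠ v) :
    ∃ S : Set V, IsPVC3 G S ∧ (∀ T : Set V, IsPVC3 G T → S.ncard ≤ T.ncard) ∧
      w ∈ S ∧ u ∉ S ∧ v ∉ S := by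
  classical
  have hvu : G.Adj v u := by
    have : u ∈ G.neighborSet v := by rw [hNv]; rfl
    exact this
  have huv : G.Adj u v := hvu.symm
  have huw : G.Adj u w := by
    have : w ∈ G.neighborSet u := by rw [hNu]; right; rfl
    exact this
  have hne_uv : u ≠ v := huv.ne
  have hne_uw : u ≠ w := huw.ne
  have hvw : v ≠ w := fun h => hwv h.symm
  have hNv' : ∀ x, G.Adj v x → x = u := by
    intro x hx
    have : x ∈ G.neighborSet v := hx
    rw [hNv] at this
    exact this
  have hNu' : ∀ x, G.Adj u x → x = v ∨ x = w := by
    intro x hx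
    have : x ∈ G.neighborSet u := hx
    rw [hNu] at this
    exact this
  have hU : IsPVC3 G (Set.univ) := fun a b c _ _ _ => Or.inl trivial
  have hex : ∃ n, ∃ T : Set V, IsPVC3 G T ∧ T.ncard = n := ⟨_, Set.univ, hU, rfl⟩
  obtain ⟨T, hT, hTn⟩ := Nat.find_spec hex
  have hmin : ∀ T' : Set V, IsPVC3 G T' → T.ncard ≤ T'.ncard := by
    intro T' hT'
    rw [hTn]
    exact Nat.find_min' hex ⟨T', hT', rfl⟩
  set S : Set V := insert w (T \ {u, v}) with hS
  have hwS : w ∈ S := Set.mem_insert _ _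
  have huS : u ∉ S := by
    intro h
    rcases h with h | ⟨_, h⟩
    · exact hne_uw h
    · exact h (Or.inl rfl)
  have hvS : v ∉ S := by
    intro h
    rcases h with h | ⟨_, h⟩
    · exact hvw h
    · exact h (Or.inr rfl)
  have hSpvc : IsPVC3 G S := by
    intro a b c hab hbc hac
    by_contra h
    push_neg at h
    obtain ⟨ha, hb, hc⟩ := h
    have key : ∀ x, x ∉ S → x ∈ T → x = u ∨ x = v := by
      intro x hx hxT
      by_contra hx'
      push_neg at hx'
      exact hx (Set.mem_insert_of_mem _ ⟨hxT, by simp [hx'.1, hx'.2]⟩)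
    have hwa : a ≠ w := fun h => ha (h ▸ hwS)
    have hwb : b ≠ w := fun h => hb (h ▸ hwS)
    have hwc : c ≠ w := fun h => hc (h ▸ hwS)
    rcases hT a b c hab hbc hac with hTa | hTb | hTc
    · rcases key a ha hTa with h1 | h1 <;> subst h1
      · rcases hNu' b hab with h2 | h2 <;> subst h2
        · exact hac ((hNv' c hbc).trans (hNv' a hab.symm).symm).symm
        · exact hwb rfl
      · have h2 : b = u := hNv' b hab
        subst h2
        rcases hNu' c hbc with h3 | h3 <;> subst h3
        · exact hac rfl
        · exact hwc rfl
    · rcases key b hb hTb with h1 | h1 <;> subst h1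
      · rcases hNu' a hab.symm with h2 | h2 <;> subst h2
        · rcases hNu' c hbc with h3 | h3 <;> subst h3
          · exact hac rfl
          · exact hwc rfl
        · exact hwa rfl
      · have h2 : a = u := hNv' a hab.symm
        have h3 : c = u := hNv' c hbc
        exact hac (h2.trans h3.symm)
    · rcases key c hc hTc with h1 | h1 <;> subst h1
      · rcases hNu' b hbc.symm with h2 | h2 <;> subst h2
        · exact hac (hNv' a hab.symm)
        · exact hwb rfl
      · have h2 : b = u := hNv' b hbc.symm
        subst h2
        rcases hNu' a hab.symm with h3 | h3 <;> subst h3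
        · exact hac rfl
        · exact hwa rfl
  have hcard : S.ncard ≤ T.ncard := by
    rcases hT v u w hvu huw hvw with hvT | huT | hwT
    · have hsub : S ⊆ insert w (T \ {v}) := by
        apply Set.insert_subset_insert
        intro x hx
        exact ⟨hx.1, fun h => hx.2 (Or.inr h)⟩
      calc S.ncard ≤ (insert w (T \ {v})).ncard :=
            Set.ncard_le_ncard hsub (Set.toFinite _)
        _ ≤ (T \ {v}).ncard + 1 := Set.ncard_insert_le _ _
        _ = T.ncard := Set.ncard_diff_singleton_add_one hvT (Set.toFinite T)
    · have hsub : S ⊆ insert w (T \ {u}) := by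
        apply Set.insert_subset_insert
        intro x hx
        exact ⟨hx.1, fun h => hx.2 (Or.inl h)⟩
      calc S.ncard ≤ (insert w (T \ {u})).ncard :=
            Set.ncard_le_ncard hsub (Set.toFinite _)
        _ ≤ (T \ {u}).ncard + 1 := Set.ncard_insert_le _ _
        _ = T.ncard := Set.ncard_diff_singleton_add_one huT (Set.toFinite T)
    · have hsub : S ⊆ T := by
        intro x hx
        rcases hx with rfl | hx
        · exact hwT
        · exact hx.1
      exact Set.ncard_le_ncard hsub (Set.toFinite T)
  exact ⟨S, hSpvc, fun T' hT' => le_trans hcard (hmin T' hT'), hwS, huS, hvS⟩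
end
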